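/- arXiv:2409.12068 — 4 statements merged into one kernel-verified Lean document; each statement's English description precedes it below -/
import Mathlib

section
/- Let x be a finite word over Σ₃ that is an even-r-power, i.e., x = p^r where the word p contains an even number of occurrences of the letter 2 (x has period |p|, prefix p, and |x| = r·|p|). Then for all n ≥ 0, the word τ(g(fⁿ(x))) has period |τ(g(fⁿ(p)))|. -/
abbrev Word := List (Fin 3)
abbrev InfWord := ℕ → Fin 3

/-- `u` is a (finite, contiguous) factor of the infinite word `w`. -/
def IsFactor (w : InfWord) (u : Word) : Prop :=
  ∃ i : ℕ, u = (List.range u.length).map fun k => w (i + k)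

/-- `u` is a prefix of the infinite word `z`. -/
def IsPrefixInf (u : Word) (z : InfWord) : Prop :=
  u = (List.range u.length).map z

/-- `p` is a period of the finite word `w`. -/
def HasPeriod (w : Word) (p : ℕ) : Prop :=
  0 < p ∧ p ≤ w.length ∧ ∀ i : ℕ, i + p < w.length → w.getD (i + p) 0 = w.getD i 0

/-- The infinite word `w` is `α`-power-free: it has no nonempty factor `u`
with a period `p` satisfying `|u|/p ≥ α`. -/
def PowerFree (α : ℚ) (w : InfWord) : Prop :=
  ∀ (u : Word) (p : ℕ), IsFactor w u → u ≠ [] → HasPeriod u p →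
    (u.length : ℚ) / (p : ℚ) < α

/-- The set of palindromic factors of a finite word. -/
def palSet (w : Word) : Set Word := {u | u <:+: w ∧ u.reverse = u}

/-- A finite word of length `n` is rich if it has exactly `n + 1`
distinct palindromic factors (including the empty word). -/
def RichWord (w : Word) : Prop := (palSet w).ncard = w.length + 1

/-- An infinite word is rich if all of its finite factors are rich. -/
def RichSeq (z : InfWord) : Prop := ∀ u : Word, IsFactor z u → RichWord u

def fm : Fin 3 → Word := ![[0, 1], [0, 2, 2], [0, 2]]
def gm : Fin 3 → Word := ![[2, 0], [2, 1], [2]]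
def t1 : Fin 3 → Word :=
  ![[0, 0, 1], [0, 0, 1, 0, 1, 1, 0, 1],
    [0, 0, 1, 0, 1, 1, 0, 1, 0, 0, 1, 0, 1, 1, 0, 1]]
def t2 : Fin 3 → Word :=
  ![[0, 0, 2], [0, 0, 2, 0, 2, 2, 0, 2],
    [0, 0, 2, 0, 2, 2, 0, 2, 0, 0, 2, 0, 2, 2, 0, 2]]

/-- The morphism `f` on finite words. -/
def fList (w : Word) : Word := w.flatMap fm
/-- The morphism `g` on finite words. -/
def gList (w : Word) : Word := w.flatMap gm

def tauAux : Bool → Word → Word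
  | _, [] => []
  | b, a :: w => (if b then t1 a else t2 a) ++ tauAux (!b) w

/-- The transducer `τ` on finite words: `t1` is applied to even-indexed letters
and `t2` to odd-indexed letters. -/
def tauList (w : Word) : Word := tauAux true w

/-- The morphism `f` on infinite words. -/
def fInf (x : InfWord) : InfWord :=
  fun i => (fList ((List.range (i + 1)).map x)).getD i 0
/-- The morphism `g` on infinite words. -/
def gInf (x : InfWord) : InfWord :=
  fun i => (gList ((List.range (i + 1)).map x)).getD i 0
/-- The transducer `τ` on infinite words. -/
def tauInf (x : InfWord) : InfWord :=
  fun i => (tauList ((List.range (i + 1)).map x)).getD i 0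

/-- The critical exponent of an infinite word. -/
noncomputable def criticalExponent (z : InfWord) : ℝ :=
  sSup {r : ℝ | ∃ (u : Word) (p : ℕ), IsFactor z u ∧ u ≠ [] ∧ HasPeriod u p ∧
    r = (u.length : ℝ) / (p : ℝ)}

lemma flatMap_pref (m : Fin 3 → Word) {u v : Word} (h : u <+: v) :
    u.flatMap m <+: v.flatMap m := by
  obtain ⟨t, rfl⟩ := h
  rw [List.flatMap_append]; exact List.prefix_append _ _

lemma prefix_shift_of' (x p : Word) (hpre : p <+: x) (hper : HasPeriod x p.length) :
    x <+: p ++ x := by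
  rw [List.prefix_iff_eq_take]
  apply List.ext_getElem
  · simp
  · intro i hi _
    rw [List.getElem_take]
    rcases lt_or_ge i p.length with h | h
    · rw [List.getElem_append_left h, hpre.getElem]
    · rw [List.getElem_append_right h]
      have h2 := hper.2.2 (i - p.length) (by omega)
      rw [show i - p.length + p.length = i from by omega] at h2
      rw [List.getD_eq_getElem _ _ hi, List.getD_eq_getElem _ _ (by omega)] at h2
      exact h2

lemma hasPeriod_of_shift (x q : Word) (h : x <+: q ++ x) (hq0 : 0 < q.length)
    (hql : q.length ≤ x.length) : HasPeriod x q.length := by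
  refine ⟨hq0, hql, fun i hi => ?_⟩
  rw [List.getD_eq_getElem _ _ hi, List.getD_eq_getElem _ _ (by omega)]
  have h1 : x[i + q.length] = (q ++ x)[i + q.length]'(by simp; omega) :=
    h.getElem (by omega)
  rw [h1, List.getElem_append_right (by omega)]
  congr 1
  omega

lemma tauAux_append (u v : Word) (b : Bool) :
    tauAux b (u ++ v) = tauAux b u ++ tauAux (if u.length % 2 = 0 then b else !b) v := by
  induction u generalizing b with
  | nil => simp [tauAux]
  | cons a t ih =>
    show (if b then t1 a else t2 a) ++ tauAux (!b) (t ++ v) =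
      ((if b then t1 a else t2 a) ++ tauAux (!b) t) ++
        tauAux (if (t.length + 1) % 2 = 0 then b else !b) v
    rw [ih (!b), List.append_assoc]
    rcases Nat.mod_two_eq_zero_or_one t.length with h | h <;>
      simp [h, Nat.add_mod]

lemma tauAux_pref (b : Bool) {u v : Word} (h : u <+: v) :
    tauAux b u <+: tauAux b v := by
  obtain ⟨t, rfl⟩ := h
  rw [tauAux_append]; exact List.prefix_append _ _

lemma fList_ne_nil {w : Word} (h : w ≠ []) : fList w ≠ [] := by
  cases w with
  | nil => exact absurd rfl h
  | cons a t =>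
    show fm a ++ fList t ≠ []
    fin_cases a <;> simp [fm]

lemma fList_iter_ne_nil {w : Word} (h : w ≠ []) (n : ℕ) : fList^[n] w ≠ [] := by
  induction n with
  | zero => exact h
  | succ k ih => rw [Function.iterate_succ_apply']; exact fList_ne_nil ih

lemma gList_ne_nil {w : Word} (h : w ≠ []) : gList w ≠ [] := by
  cases w with
  | nil => exact absurd rfl h
  | cons a t =>
    show gm a ++ gList t ≠ []
    fin_cases a <;> simp [gm]

lemma tauList_ne_nil {w : Word} (h : w ≠ []) : tauList w ≠ [] := by
  cases w with
  | nil => exact absurd rfl h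
  | cons a t =>
    show (if true then t1 a else t2 a) ++ tauAux false t ≠ []
    fin_cases a <;> simp [t1]

lemma fList_count2 (w : Word) : (fList w).count 2 % 2 = w.count 2 % 2 := by
  induction w with
  | nil => rfl
  | cons a t ih =>
    show (fm a ++ fList t).count 2 % 2 = _
    rw [List.count_append, List.count_cons]
    fin_cases a <;> simp [fm, Nat.add_mod, ih] <;> omega

lemma fList_iter_count2 (w : Word) (n : ℕ) :
    (fList^[n] w).count 2 % 2 = w.count 2 % 2 := by
  induction n with
  | zero => rfl
  | succ k ih => rw [Function.iterate_succ_apply', fList_count2, ih]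

lemma gList_length_mod (w : Word) : (gList w).length % 2 = w.count 2 % 2 := by
  induction w with
  | nil => rfl
  | cons a t ih =>
    show (gm a ++ gList t).length % 2 = _
    rw [List.length_append, List.count_cons]
    fin_cases a <;> simp [gm, Nat.add_mod, ih] <;> omega

lemma fList_iter_pref {u v : Word} (h : u <+: v) (n : ℕ) :
    fList^[n] u <+: fList^[n] v := by
  induction n with
  | zero => exact h
  | succ k ih =>
    rw [Function.iterate_succ_apply', Function.iterate_succ_apply']
    exact flatMap_pref fm ih

lemma fList_iter_shift {x p : Word} (h : x <+: p ++ x) (n : ℕ) :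
    fList^[n] x <+: fList^[n] p ++ fList^[n] x := by
  induction n with
  | zero => exact h
  | succ k ih =>
    rw [Function.iterate_succ_apply', Function.iterate_succ_apply']
    have := flatMap_pref fm ih
    rw [List.flatMap_append] at this
    exact this

/-- If `x` is an even-`r`-power with repeated prefix `p` (so `p` has an even number
of `2`'s), then for all `n ≥ 0` the word `τ(g(fⁿ(x)))` has period `|τ(g(fⁿ(p)))|`. -/
theorem even_power_periods (x p : Word) (hp : p ≠ []) (hpre : p <+: x)
    (hper : HasPeriod x p.length) (heven : p.count 2 % 2 = 0) (n : ℕ) :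
    HasPeriod (tauList (gList (fList^[n] x))) (tauList (gList (fList^[n] p))).length := by
  set P := fList^[n] p with hP
  set X := fList^[n] x with hX
  have hPne : P ≠ [] := fList_iter_ne_nil hp n
  have hGPne : gList P ≠ [] := gList_ne_nil hPne
  have hTPne : tauList (gList P) ≠ [] := tauList_ne_nil hGPne
  have hPX : P <+: X := fList_iter_pref hpre n
  have hshift : X <+: P ++ X := fList_iter_shift (prefix_shift_of' x p hpre hper) n
  have hGshift : gList X <+: gList P ++ gList X := by
    have := flatMap_pref gm hshift
    rw [List.flatMap_append] at this
    exact this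
  have hparity : (gList P).length % 2 = 0 := by
    rw [gList_length_mod, hP, fList_iter_count2, heven]
  have htau : tauList (gList X) <+: tauList (gList P) ++ tauList (gList X) := by
    have h1 := tauAux_pref true hGshift
    rwa [tauAux_append, hparity, if_pos rfl] at h1
  have hpref : tauList (gList P) <+: tauList (gList X) :=
    tauAux_pref true (flatMap_pref gm hPX)
  exact hasPeriod_of_shift _ _ htau
    (List.length_pos_iff.mpr hTPne) hpref.length_le
end

section
/- For all n ≥ 0: |fⁿ(2)| ≤ |fⁿ(0)| ≤ |fⁿ(1)| ≤ 2·|fⁿ(2)|, and |τ(g(fⁿ(2)))| ≤ |τ(g(fⁿ(0)))| ≤ |τ(g(fⁿ(1)))| ≤ 2·|τ(g(fⁿ(2)))|. -/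
lemma fList_append (u v : Word) : fList (u ++ v) = fList u ++ fList v :=
  List.flatMap_append

lemma fList_iter_append (n : ℕ) (u v : Word) :
    fList^[n] (u ++ v) = fList^[n] u ++ fList^[n] v := by
  induction n generalizing u v with
  | zero => rfl
  | succ n ih =>
    rw [Function.iterate_succ_apply, Function.iterate_succ_apply, Function.iterate_succ_apply,
      fList_append, ih]

def wt : Fin 3 → ℕ := ![3, 8, 16]

lemma tauAux_length (b : Bool) (w : Word) :
    (tauAux b w).length = (w.map wt).sum := by
  induction w generalizing b with
  | nil => rfl
  | cons a w ih =>
    simp only [tauAux, List.length_append, List.map_cons, List.sum_cons, ih]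
    congr 1
    cases b <;> fin_cases a <;> rfl

def L2 (w : Word) : ℕ := (tauList (gList w)).length

lemma L2_eq (w : Word) : L2 w = (w.map (fun a => ((gm a).map wt).sum)).sum := by
  unfold L2 tauList gList
  rw [tauAux_length]
  induction w with
  | nil => rfl
  | cons a w ih => simp [List.flatMap_cons, ih]

lemma L2_append (u v : Word) : L2 (u ++ v) = L2 u + L2 v := by
  rw [L2_eq, L2_eq, L2_eq, List.map_append, List.sum_append]

lemma L2_0 : L2 [0] = 19 := rfl
lemma L2_1 : L2 [1] = 24 := rfl
lemma L2_2 : L2 [2] = 16 := rfl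

lemma fList_iter_succ (n : ℕ) (w : Word) :
    fList^[n + 1] w = fList^[n] (fList w) := Function.iterate_succ_apply fList n w

/-- Length comparisons: for all `n ≥ 0`,
`|fⁿ(2)| ≤ |fⁿ(0)| ≤ |fⁿ(1)| ≤ 2|fⁿ(2)|` and
`|τ(g(fⁿ(2)))| ≤ |τ(g(fⁿ(0)))| ≤ |τ(g(fⁿ(1)))| ≤ 2|τ(g(fⁿ(2)))|`. -/
theorem length_comparison (n : ℕ) :
    ((fList^[n] [2]).length ≤ (fList^[n] [0]).length ∧
      (fList^[n] [0]).length ≤ (fList^[n] [1]).length ∧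
      (fList^[n] [1]).length ≤ 2 * (fList^[n] [2]).length) ∧
    ((tauList (gList (fList^[n] [2]))).length ≤ (tauList (gList (fList^[n] [0]))).length ∧
      (tauList (gList (fList^[n] [0]))).length ≤ (tauList (gList (fList^[n] [1]))).length ∧
      (tauList (gList (fList^[n] [1]))).length ≤
        2 * (tauList (gList (fList^[n] [2]))).length) := by
  have key : ∀ m : ℕ,
      ((fList^[m] [2]).length ≤ (fList^[m] [0]).length ∧
        (fList^[m] [0]).length ≤ (fList^[m] [1]).length ∧
        (fList^[m] [1]).length ≤ 2 * (fList^[m] [2]).length) ∧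
      (L2 (fList^[m] [2]) ≤ L2 (fList^[m] [0]) ∧
        L2 (fList^[m] [0]) ≤ L2 (fList^[m] [1]) ∧
        L2 (fList^[m] [1]) ≤ 2 * L2 (fList^[m] [2])) := by
    intro m
    induction m with
    | zero => simp [L2_0, L2_1, L2_2]
    | succ m ih =>
      have h0 : fList ([0] : Word) = [0] ++ [1] := rfl
      have h1 : fList ([1] : Word) = [0] ++ ([2] ++ [2]) := rfl
      have h2 : fList ([2] : Word) = [0] ++ [2] := rfl
      rw [fList_iter_succ, fList_iter_succ, fList_iter_succ, h0, h1, h2,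
        fList_iter_append, fList_iter_append, fList_iter_append, fList_iter_append]
      simp only [List.length_append, L2_append]
      omega
  exact key n
end

section
/- Let w be a finite word over Σ₃. If w is middle-class, then the word τ(w)·00 (the image of w under the transducer τ followed by the two letters 00) is not rich. -/
/-- A word `w` is middle-class if it begins with `2` and every odd-length
palindromic prefix of `w` occurs again in `w` starting at an even index. -/
def MiddleClass (w : Word) : Prop :=
  w.head? = some 2 ∧
    ∀ u : Word, u <+: w → u.reverse = u → u.length % 2 = 1 →
      ∃ p s : Word, w = p ++ u ++ s ∧ p ≠ [] ∧ p.length % 2 = 0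

section Aux


lemma palSet_finite (w : Word) : (palSet w).Finite := by
  apply Set.Finite.subset (w.sublists.toFinset.finite_toSet)
  intro u hu
  simp only [List.coe_toFinset, Set.mem_setOf_eq, List.mem_sublists]
  exact hu.1.sublist

-- if u is an infix of w++[a] but not a suffix, it's an infix of w
lemma infix_of_infix_concat {w u : Word} {a : Fin 3}
    (h : u <:+: w ++ [a]) (hns : ¬ u <:+ (w ++ [a])) : u <:+: w := by
  obtain ⟨s, t, hst⟩ := h
  rcases List.eq_nil_or_concat t with rfl | ⟨t', x, rfl⟩
  · exact absurd ⟨s, by simpa using hst⟩ hns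
  · simp only [List.concat_eq_append, ← List.append_assoc] at hst
    obtain ⟨h1, -⟩ := List.append_inj' hst (by simp)
    exact ⟨s, t', h1⟩

lemma pal_suffix_prefix {u v : Word} (hu : u.reverse = u) (hv : v.reverse = v)
    (h : u <:+ v) : u <+: v := by
  rw [← hu, ← hv] at h
  exact List.reverse_suffix.mp h

lemma palSet_concat_subsingleton (w : Word) (a : Fin 3) :
    (palSet (w ++ [a]) \ palSet w).Subsingleton := by
  rintro u ⟨⟨hui, hup⟩, hunw⟩ v ⟨⟨hvi, hvp⟩, hvnw⟩
  have hus : u <:+ (w ++ [a]) := by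
    by_contra hns
    exact hunw ⟨infix_of_infix_concat hui hns, hup⟩
  have hvs : v <:+ (w ++ [a]) := by
    by_contra hns
    exact hvnw ⟨infix_of_infix_concat hvi hns, hvp⟩
  -- wlog style: prove aux and use symmetry
  have key : ∀ u v : Word, u.reverse = u → v.reverse = v → u <:+ v → v <:+ (w ++ [a]) →
      ¬ u <:+: w → u = v := by
    intro u v hup hvp huv hvs hunw
    by_contra hne
    have hpre : u <+: v := pal_suffix_prefix hup hvp huv
    obtain ⟨t, rfl⟩ := hpre
    have ht : t ≠ [] := by rintro rfl; simp at hne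
    obtain ⟨s, hs⟩ := hvs
    rcases List.eq_nil_or_concat t with rfl | ⟨t', x, rfl⟩
    · exact ht rfl
    · simp only [List.concat_eq_append, ← List.append_assoc] at hs
      obtain ⟨h1, -⟩ := List.append_inj' hs (by simp)
      exact hunw ⟨s, t', h1⟩
  have h1 : u <:+ v ∨ v <:+ u := List.suffix_or_suffix_of_suffix hus hvs
  rcases h1 with h | h
  · exact key u v hup hvp h hvs (fun hc => hunw ⟨hc, hup⟩)
  · exact (key v u hvp hup h hus (fun hc => hvnw ⟨hc, hvp⟩)).symm

lemma palSet_card_le (w : Word) : (palSet w).ncard ≤ w.length + 1 := by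
  induction w using List.reverseRecOn with
  | nil =>
    have : palSet [] = {[]} := by
      ext u; simp [palSet, List.infix_nil]
      rintro rfl; rfl
    simp [this]
  | append_singleton w a ih =>
    have hsub : palSet (w ++ [a]) ⊆ palSet w ∪ (palSet (w ++ [a]) \ palSet w) := by
      intro u hu; by_cases h : u ∈ palSet w
      · exact Or.inl h
      · exact Or.inr ⟨hu, h⟩
    calc (palSet (w ++ [a])).ncard
        ≤ (palSet w ∪ (palSet (w ++ [a]) \ palSet w)).ncard :=
          Set.ncard_le_ncard hsub ((palSet_finite w).union ((palSet_finite _).diff))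
      _ ≤ (palSet w).ncard + (palSet (w ++ [a]) \ palSet w).ncard := Set.ncard_union_le _ _
      _ ≤ (w.length + 1) + 1 := by
          gcongr
          rcases (palSet_concat_subsingleton w a).eq_empty_or_singleton with h | ⟨x, h⟩ <;>
            simp [h]
      _ = (w ++ [a]).length + 1 := by simp

lemma palSet_reverse (z : Word) : palSet z.reverse = palSet z := by
  ext u
  constructor <;> rintro ⟨hi, hp⟩ <;> refine ⟨?_, hp⟩
  · rw [← hp] at hi; rw [← List.reverse_infix] at hi; simpa using hi
  · rw [← List.reverse_infix, List.reverse_reverse]; rw [← hp] at hi; simpa [hp] using hi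

lemma rich_extract {z : Word} (hz : z ≠ []) (hr : RichWord z) :
    ∃ V : Word, V <+: z ∧ V.reverse = V ∧ ¬ V <:+: z.tail := by
  have hry : (palSet z.reverse).ncard = z.length + 1 := by rw [palSet_reverse]; exact hr
  set y := z.reverse with hy
  have hyne : y ≠ [] := by simpa [hy] using hz
  have hsub : ¬ palSet y ⊆ palSet y.dropLast := by
    intro hs
    have h1 := Set.ncard_le_ncard hs (palSet_finite _)
    have h2 := palSet_card_le y.dropLast
    have h3 : y.dropLast.length = z.length - 1 := by simp [hy]
    have h4 : 1 ≤ z.length := List.length_pos_iff.2 hz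
    omega
  obtain ⟨V, hVy, hVnd⟩ := Set.not_subset.1 hsub
  obtain ⟨hVi, hVp⟩ := hVy
  have hVs : V <:+ y := by
    obtain ⟨s, t, hst⟩ := hVi
    rcases List.eq_nil_or_concat t with rfl | ⟨t', x, rfl⟩
    · exact ⟨s, by simpa using hst⟩
    · exfalso
      apply hVnd
      refine ⟨⟨s, t', ?_⟩, hVp⟩
      simp only [List.concat_eq_append, ← List.append_assoc] at hst
      rw [← hst, List.dropLast_concat]
  refine ⟨V, ?_, hVp, ?_⟩
  · exact List.reverse_suffix.mp (by rw [hVp]; exact hVs)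
  · intro hc
    apply hVnd
    refine ⟨?_, hVp⟩
    have hrev : z.tail.reverse = y.dropLast := by
      rcases z with _ | ⟨b, z'⟩
      · simp at hz
      · simp [hy]
    rw [← hrev, ← hVp]
    exact List.reverse_infix.2 hc



def Lb : Bool → Word := fun b => if b then [1,0,1,1,0,1] else [2,0,2,2,0,2]
def Sb : Bool → Word := fun b => if b then [1] else [2]

def Good (c : Word) : Prop := c = Sb true ∨ c = Lb true ∨ c = Sb false ∨ c = Lb false

def glue (cs : List Word) : Word := cs.flatMap (fun c => [0,0] ++ c)
def glueAll (cs : List Word) : Word := glue cs ++ [0,0]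

lemma glue_cons (c : Word) (cs : List Word) : glue (c :: cs) = [0,0] ++ c ++ glue cs := by
  simp [glue, List.append_assoc]

lemma glueAll_cons (c : Word) (cs : List Word) :
    glueAll (c :: cs) = [0,0] ++ c ++ glueAll cs := by
  simp [glueAll, glue_cons, List.append_assoc]

lemma glueAll_nil : glueAll [] = [0,0] := rfl

lemma glue_append (cs ds : List Word) : glue (cs ++ ds) = glue cs ++ glue ds := by
  simp [glue]

lemma glueAll_concat (cs : List Word) (c : Word) :
    glueAll (cs ++ [c]) = glueAll cs ++ c ++ [0,0] := by
  simp [glueAll, glue_append, glue_cons, glue, List.append_assoc]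

-- Good block facts
lemma Good.ne_nil {c : Word} (h : Good c) : c ≠ [] := by
  rcases h with rfl | rfl | rfl | rfl <;> simp [Sb, Lb]

lemma Good.head_ne_zero {c : Word} (h : Good c) {x : Fin 3} {t : Word} (he : c = x :: t) :
    x ≠ 0 := by
  rcases h with rfl | rfl | rfl | rfl <;> simp_all [Sb, Lb] <;> omega

lemma Good.getLast?_ne_zero {c : Word} (h : Good c) : c.getLast? ≠ some 0 := by
  rcases h with rfl | rfl | rfl | rfl <;> decide

lemma Good.not_infix_00 {c : Word} (h : Good c) : ¬ [(0:Fin 3), 0] <:+: c := by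
  rcases h with rfl | rfl | rfl | rfl <;> decide

lemma Good.rev {c : Word} (h : Good c) : c.reverse = c := by
  rcases h with rfl | rfl | rfl | rfl <;> decide

lemma glueAll_starts (cs : List Word) : ∃ r, glueAll cs = 0 :: 0 :: r := by
  cases cs with
  | nil => exact ⟨[], rfl⟩
  | cons c cs => exact ⟨c ++ glueAll cs, by simp [glueAll_cons]⟩

-- P' : every occurrence of 00 in glueAll is a separator
lemma sep_occurrence : ∀ (cs : List Word), (∀ c ∈ cs, Good c) →
    ∀ pre suf, glueAll cs = pre ++ [0,0] ++ suf →
    ∃ ds es, cs = ds ++ es ∧ pre = glue ds ∧ [(0:Fin 3),0] ++ suf = glueAll es := by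
  intro cs
  induction cs with
  | nil =>
    intro _ pre suf h
    rw [glueAll_nil] at h
    have hl := congrArg List.length h
    simp at hl
    have hpre : pre = [] := List.length_eq_zero_iff.mp (by omega)
    have hsuf : suf = [] := List.length_eq_zero_iff.mp (by omega)
    subst hpre; subst hsuf
    exact ⟨[], [], rfl, rfl, rfl⟩
  | cons c cs ih =>
    intro hg pre suf h
    rw [glueAll_cons] at h
    simp only [List.append_assoc, List.cons_append, List.nil_append] at h
    match pre with
    | [] =>
      refine ⟨[], c :: cs, rfl, rfl, ?_⟩
      rw [glueAll_cons]
      simp only [List.append_assoc, List.cons_append, List.nil_append]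
      exact h.symm
    | [p0] =>
      exfalso
      injection h with e0 h
      injection h with e1 h
      have hgc := hg c (by simp)
      obtain ⟨x, t, rfl⟩ := List.exists_cons_of_ne_nil hgc.ne_nil
      simp only [List.cons_append] at h
      injection h with e2 h
      exact hgc.head_ne_zero rfl e2
    | p0 :: p1 :: pre' =>
      injection h with e0 h
      injection h with e1 h
      subst e0; subst e1
      rcases List.append_eq_append_iff.mp h with ⟨a', hpre', hglue⟩ | ⟨c', hc, hd⟩
      · obtain ⟨ds', es', hcs, hpr, hes⟩ :=
          ih (fun c hc => hg c (by simp [hc])) a' suf (by simpa using hglue)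
        refine ⟨c :: ds', es', by simp [hcs], ?_, hes⟩
        simp [glue_cons, hpre', hpr]
      · match c' , hc, hd with
        | [], hc, hd =>
          refine ⟨[c], cs, rfl, ?_, by simpa using hd⟩
          simp only [List.append_nil] at hc
          simp [glue_cons, glue, hc]
        | [x], hc, hd =>
          exfalso
          injection hd with e2 hd
          subst e2
          exact (hg c (by simp)).getLast?_ne_zero (by rw [hc, List.getLast?_concat])
        | x :: y :: c'', hc, hd =>
          exfalso
          simp only [List.cons_append] at hd
          injection hd with e2 hd
          injection hd with e3 hd
          subst e2; subst e3
          exact (hg c (by simp)).not_infix_00 ⟨pre', c'', by rw [hc]; simp⟩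

lemma glueAll_rev (cs : List Word) :
    (glueAll cs).reverse = glueAll (cs.reverse.map List.reverse) := by
  induction cs with
  | nil => rfl
  | cons c cs ih =>
    rw [glueAll_cons]
    simp only [List.reverse_append, List.reverse_cons, List.reverse_nil]
    rw [ih]
    rw [List.map_append]
    show _ = glueAll (_ ++ [c.reverse])
    rw [glueAll_concat]
    simp

lemma glueAll_inj : ∀ (cs₁ cs₂ : List Word), (∀ c ∈ cs₁, Good c) → (∀ c ∈ cs₂, Good c) →
    glueAll cs₁ = glueAll cs₂ → cs₁ = cs₂ := by
  intro cs₁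
  induction cs₁ with
  | nil =>
    intro cs₂ _ hg2 h
    cases cs₂ with
    | nil => rfl
    | cons c cs =>
      exfalso
      rw [glueAll_nil, glueAll_cons] at h
      have h1 : 1 ≤ c.length := List.length_pos_iff.mpr (hg2 c (by simp)).ne_nil
      have h2 : 2 ≤ (glueAll cs).length := by
        obtain ⟨r, hr⟩ := glueAll_starts cs
        rw [hr]; simp
      have hl := congrArg List.length h
      simp only [List.length_append, List.length_cons, List.length_nil] at hl
      omega
  | cons c₁ cs₁' ih =>
    intro cs₂ hg1 hg2 h
    cases cs₂ with
    | nil =>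
      exfalso
      rw [glueAll_nil, glueAll_cons] at h
      have h1 : 1 ≤ c₁.length := List.length_pos_iff.mpr (hg1 c₁ (by simp)).ne_nil
      have h2 : 2 ≤ (glueAll cs₁').length := by
        obtain ⟨r, hr⟩ := glueAll_starts cs₁'
        rw [hr]; simp
      have hl := congrArg List.length h
      simp only [List.length_append, List.length_cons, List.length_nil] at hl
      omega
    | cons c₂ cs₂' =>
      rw [glueAll_cons, glueAll_cons] at h
      simp only [List.append_assoc, List.cons_append, List.nil_append] at h
      injection h with e0 h
      injection h with e1 h
      -- h : c₁ ++ glueAll cs₁' = c₂ ++ glueAll cs₂'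
      have key : ∀ (c₁ c₂ : Word) (cs₁' cs₂' : List Word), Good c₁ → Good c₂ →
          c₁ ++ glueAll cs₁' = c₂ ++ glueAll cs₂' →
          (∃ a', c₂ = c₁ ++ a' ∧ glueAll cs₁' = a' ++ glueAll cs₂') →
          c₁ = c₂ ∧ glueAll cs₁' = glueAll cs₂' := by
        intro c₁ c₂ cs₁' cs₂' hgc1 hgc2 h hcase
        obtain ⟨a', hc2, hga⟩ := hcase
        match a' with
        | [] => simp only [List.append_nil] at hc2 hga; exact ⟨hc2.symm, by rw [hga]; simp⟩
        | [x] =>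
          exfalso
          obtain ⟨r, hr⟩ := glueAll_starts cs₁'
          rw [hr] at hga
          injection hga with e2 hga
          subst e2
          exact hgc2.getLast?_ne_zero (by rw [hc2, List.getLast?_concat])
        | x :: y :: a'' =>
          exfalso
          obtain ⟨r, hr⟩ := glueAll_starts cs₁'
          rw [hr] at hga
          simp only [List.cons_append] at hga
          injection hga with e2 hga
          injection hga with e3 hga
          subst e2; subst e3
          exact hgc2.not_infix_00 ⟨c₁, a'', by rw [hc2]; simp⟩
      have hgc1 := hg1 c₁ (by simp)
      have hgc2 := hg2 c₂ (by simp)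
      rcases List.append_eq_append_iff.mp h with hcase | hcase
      · obtain ⟨he, hg⟩ := key c₁ c₂ cs₁' cs₂' hgc1 hgc2 h hcase
        rw [he, ih cs₂' (fun c hc => hg1 c (by simp [hc])) (fun c hc => hg2 c (by simp [hc])) hg]
      · obtain ⟨he, hg⟩ := key c₂ c₁ cs₂' cs₁' hgc2 hgc1 h.symm hcase
        rw [he, ih cs₂' (fun c hc => hg1 c (by simp [hc])) (fun c hc => hg2 c (by simp [hc])) hg.symm]

lemma glueAll_eq_cons_append (cs : List Word) : ∃ t, glueAll cs = [(0:Fin 3),0] ++ t := by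
  obtain ⟨r, hr⟩ := glueAll_starts cs
  exact ⟨r, by rw [hr]; rfl⟩

-- occurrence lemma
lemma glue_occurrence {cs P ds SS : List Word} (hcs : cs = P ++ ds ++ SS) (hP : P ≠ []) :
    glueAll ds <:+: (glueAll cs).tail := by
  obtain ⟨c₀, P', rfl⟩ := List.exists_cons_of_ne_nil hP
  obtain ⟨t, ht⟩ := glueAll_eq_cons_append SS
  have : glueAll cs = [(0:Fin 3),0] ++ c₀ ++ glue P' ++ glue ds ++ glueAll SS := by
    rw [hcs]
    simp [glueAll, glue_append, glue_cons, List.append_assoc]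
  rw [this, ht]
  refine ⟨0 :: (c₀ ++ glue P'), t, ?_⟩
  simp [glueAll, List.append_assoc]



def blk : Bool → Fin 3 → List Word
  | b, 0 => [Sb b]
  | b, 1 => [Lb b]
  | b, _ => [Lb b, Lb b]

def R : Bool → Word → List Word
  | _, [] => []
  | b, a :: w => blk b a ++ R (!b) w

def par (b : Bool) (n : ℕ) : Bool := if n % 2 = 0 then b else !b

lemma blk_ne_nil (b : Bool) (a : Fin 3) : blk b a ≠ [] := by
  fin_cases a <;> simp [blk]

lemma blk_rev (b : Bool) (a : Fin 3) : (blk b a).reverse = blk b a := by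
  fin_cases a <;> simp [blk]

lemma par_succ (b : Bool) (n : ℕ) : par b (n+1) = par (!b) n := by
  simp only [par]
  by_cases h : n % 2 = 0
  · have h2 : (n+1) % 2 = 1 := by omega
    simp [h, h2]
  · have h1 : n % 2 = 1 := by omega
    have h2 : (n+1) % 2 = 0 := by omega
    simp [h1, h2]

lemma par_par (b : Bool) (n : ℕ) : par (par b n) n = b := by
  simp only [par]
  by_cases h : n % 2 = 0 <;> simp [h]

lemma R_single (c : Bool) (a : Fin 3) : R c [a] = blk c a := by simp [R]

lemma R_append : ∀ (u v : Word) (b : Bool), R b (u ++ v) = R b u ++ R (par b u.length) v := by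
  intro u
  induction u with
  | nil => intro v b; simp [R, par]
  | cons a u ih =>
    intro v b
    simp only [List.cons_append, R, List.append_eq, ih v (!b), List.append_assoc, List.length_cons, par_succ]

lemma R_rev : ∀ (u : Word) (b : Bool),
    (R b u).reverse = R (par (!b) u.length) u.reverse := by
  intro u
  induction u with
  | nil => intro b; simp [R]
  | cons a u ih =>
    intro b
    simp only [R, List.reverse_append, List.reverse_cons, ih (!b), Bool.not_not,
      List.length_cons, par_succ]
    rw [R_append, List.length_reverse, par_par, R_single, blk_rev]

lemma Sb_ne_Lb (b b' : Bool) : Sb b ≠ Lb b' := by cases b <;> cases b' <;> decide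
lemma Lb_ne_Lb_not (b : Bool) : Lb b ≠ Lb (!b) := by cases b <;> decide
lemma Sb_ne_Sb_not (b : Bool) : Sb b ≠ Sb (!b) := by cases b <;> decide

lemma R_nil (b : Bool) : R b [] = [] := rfl

lemma R_ne_nil {b : Bool} {u : Word} (h : u ≠ []) : R b u ≠ [] := by
  obtain ⟨a, t, rfl⟩ := List.exists_cons_of_ne_nil h
  show blk b a ++ R (!b) t ≠ []
  simp [blk_ne_nil]

lemma R_good : ∀ (u : Word) (b : Bool) (c : Word), c ∈ R b u → Good c := by
  intro u
  induction u with
  | nil => intro b c hc; simp [R] at hc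
  | cons a u ih =>
    intro b c hc
    simp only [R, List.mem_append] at hc
    rcases hc with hc | hc
    · fin_cases a <;> cases b <;> simp [blk] at hc <;>
        first
        | (exact Or.inl hc)
        | (exact Or.inr (Or.inl hc))
        | (exact Or.inr (Or.inr (Or.inl hc)))
        | (exact Or.inr (Or.inr (Or.inr hc)))
        | (rcases hc with hc | hc
           · exact Or.inr (Or.inl hc)
           · exact Or.inr (Or.inl hc))
        | (rcases hc with hc | hc
           · exact Or.inr (Or.inr (Or.inr hc))
           · exact Or.inr (Or.inr (Or.inr hc)))
    · exact ih (!b) c hc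

lemma R_head {b : Bool} {u : Word} {x : Word} {xs : List Word} (h : R b u = x :: xs) :
    x = Sb b ∨ x = Lb b := by
  cases u with
  | nil => simp [R] at h
  | cons a u =>
    fin_cases a <;> simp only [R, blk, List.cons_append, List.nil_append] at h <;>
      injection h with h1 h2 <;> [exact Or.inl h1.symm; exact Or.inr h1.symm;
        exact Or.inr h1.symm]

lemma R_no_head_Lb {b : Bool} {t : Word} {xs : List Word} (h : R (!b) t = Lb b :: xs) :
    False := by
  rcases R_head h with hx | hx
  · exact Sb_ne_Lb (!b) b hx.symm
  · exact Lb_ne_Lb_not (!b) (by rw [Bool.not_not]; exact hx.symm)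

lemma R_inj : ∀ (u₁ : Word) (u₂ : Word) (b : Bool), R b u₁ = R b u₂ → u₁ = u₂ := by
  intro u₁
  induction u₁ with
  | nil =>
    intro u₂ b h
    cases u₂ with
    | nil => rfl
    | cons a t => exact absurd h.symm (R_ne_nil (by simp))
  | cons a₁ t₁ ih =>
    intro u₂ b h
    cases u₂ with
    | nil => exact absurd h (R_ne_nil (by simp))
    | cons a₂ t₂ =>
      have h' : blk b a₁ ++ R (!b) t₁ = blk b a₂ ++ R (!b) t₂ := h
      have key : a₁ = a₂ ∧ R (!b) t₁ = R (!b) t₂ := by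
        fin_cases a₁ <;> fin_cases a₂ <;>
            simp only [blk, List.cons_append, List.nil_append] at h'
        · refine ⟨rfl, ?_⟩; exact List.append_cancel_left h'
        · exfalso; injection h' with h1 h2; exact Sb_ne_Lb b b h1
        · exfalso; injection h' with h1 h2; exact Sb_ne_Lb b b h1
        · exfalso; injection h' with h1 h2; exact Sb_ne_Lb b b h1.symm
        · refine ⟨rfl, ?_⟩; exact List.append_cancel_left h'
        · exfalso; injection h' with h1 h2; exact R_no_head_Lb h2
        · exfalso; injection h' with h1 h2; exact Sb_ne_Lb b b h1.symm
        · exfalso; injection h' with h1 h2; exact R_no_head_Lb h2.symm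
        · refine ⟨rfl, ?_⟩; rw [List.cons.injEq, List.cons.injEq] at h'; exact h'.2.2
      obtain ⟨rfl, h2⟩ := key
      rw [ih t₂ (!b) h2]

lemma R_split : ∀ (w : Word) (b : Bool) (ds es : List Word), R b w = ds ++ es →
    (∃ u v, w = u ++ v ∧ ds = R b u) ∨
    (∃ u v, w = u ++ 2 :: v ∧ ds = R b u ++ [Lb (par b u.length)]) := by
  intro w
  induction w with
  | nil =>
    intro b ds es h
    rw [R_nil] at h
    obtain ⟨h1, h2⟩ := List.append_eq_nil_iff.mp h.symm
    exact Or.inl ⟨[], [], rfl, by rw [h1, R_nil]⟩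
  | cons a w ih =>
    intro b ds es h
    cases ds with
    | nil => exact Or.inl ⟨[], a :: w, rfl, rfl⟩
    | cons d₀ ds₀ =>
      have h' : blk b a ++ R (!b) w = d₀ :: (ds₀ ++ es) := h
      fin_cases a
      · -- a = 0
        simp only [blk, List.cons_append, List.nil_append] at h'
        injection h' with e0 h''
        rcases ih (!b) ds₀ es h'' with ⟨u, v, rfl, hds⟩ | ⟨u, v, rfl, hds⟩
        · refine Or.inl ⟨0 :: u, v, rfl, ?_⟩
          show _ = blk b 0 ++ R (!b) u
          rw [← e0, hds]; rfl
        · refine Or.inr ⟨0 :: u, v, rfl, ?_⟩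
          show _ = (blk b 0 ++ R (!b) u) ++ _
          simp only [List.length_cons, par_succ]
          rw [hds] at *
          simp [blk, ← e0, List.append_assoc]
      · -- a = 1
        simp only [blk, List.cons_append, List.nil_append] at h'
        injection h' with e0 h''
        rcases ih (!b) ds₀ es h'' with ⟨u, v, rfl, hds⟩ | ⟨u, v, rfl, hds⟩
        · refine Or.inl ⟨1 :: u, v, rfl, ?_⟩
          show _ = blk b 1 ++ R (!b) u
          rw [← e0, hds]; rfl
        · refine Or.inr ⟨1 :: u, v, rfl, ?_⟩
          show _ = (blk b 1 ++ R (!b) u) ++ _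
          simp only [List.length_cons, par_succ]
          rw [hds] at *
          simp [blk, ← e0, List.append_assoc]
      · -- a = 2
        simp only [blk, List.cons_append, List.nil_append] at h'
        injection h' with e0 h''
        cases ds₀ with
        | nil =>
          refine Or.inr ⟨[], w, rfl, ?_⟩
          rw [R_nil, ← e0]
          rfl
        | cons d₁ ds₁ =>
          simp only [List.cons_append] at h''
          injection h'' with e1 h''
          rcases ih (!b) ds₁ es h'' with ⟨u, v, rfl, hds⟩ | ⟨u, v, rfl, hds⟩
          · refine Or.inl ⟨2 :: u, v, rfl, ?_⟩
            show _ = blk b 2 ++ R (!b) u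
            rw [← e0, ← e1, hds]; rfl
          · refine Or.inr ⟨2 :: u, v, rfl, ?_⟩
            show _ = (blk b 2 ++ R (!b) u) ++ _
            simp only [List.length_cons, par_succ]
            rw [hds] at *
            simp [blk, ← e0, ← e1, List.append_assoc]

end Aux


section Main

lemma blk_glue (b : Bool) (a : Fin 3) :
    (if b then t1 a else t2 a) = glue (blk b a) := by
  cases b <;> fin_cases a <;> rfl

lemma tauAux_eq : ∀ (w : Word) (b : Bool), tauAux b w = glue (R b w) := by
  intro w
  induction w with
  | nil => intro b; rfl
  | cons a w ih =>
    intro b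
    show (if b then t1 a else t2 a) ++ tauAux (!b) w = glue (blk b a ++ R (!b) w)
    rw [glue_append, blk_glue, ih]

lemma par_true_iff (n : ℕ) : par true n = true ↔ n % 2 = 0 := by
  simp only [par]
  by_cases h : n % 2 = 0 <;> simp [h]

end Main

/-- If `w` is middle-class, then `τ(w)·00` is not rich. -/
theorem middle_to_nonrich (w : Word) (hw : MiddleClass w) :
    ¬ RichWord (tauList w ++ [0, 0]) := by
  obtain ⟨hhead, hmc⟩ := hw
  obtain ⟨w', rfl⟩ : ∃ w', w = 2 :: w' := by
    cases w with
    | nil => simp at hhead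
    | cons a w' =>
      refine ⟨w', ?_⟩
      simp only [List.head?_cons, Option.some.injEq] at hhead
      rw [hhead]
  intro hr
  set cs : List Word := R true (2 :: w') with hcs
  have hz : tauList (2 :: w') ++ [0, 0] = glueAll cs := by
    rw [tauList, tauAux_eq, glueAll]
  rw [hz] at hr
  have hzne : glueAll cs ≠ [] := by
    obtain ⟨r, hrr⟩ := glueAll_starts cs
    rw [hrr]; simp
  obtain ⟨V, hVpre, hVpal, hVnt⟩ := rich_extract hzne hr
  have hgood : ∀ c ∈ cs, Good c := fun c hc => R_good _ _ c hc
  have hcs2 : cs = Lb true :: Lb true :: R false w' := by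
    rw [hcs]; rfl
  -- [0,0] is an infix of (glueAll cs).tail
  have h00 : [(0:Fin 3), 0] <:+: (glueAll cs).tail := by
    have hh : glueAll cs = [0,0] ++ Lb true ++ ([0,0] ++ (Lb true ++ glueAll (R false w'))) := by
      rw [hcs2, glueAll_cons, glueAll_cons]
      simp [List.append_assoc]
    rw [hh]
    exact ⟨0 :: Lb true, Lb true ++ glueAll (R false w'), by simp [Lb]⟩
  obtain ⟨t0, hzt⟩ := hVpre
  match V, hVpal, hVnt, hzt with
  | [], _, hVnt, _ => exact hVnt (List.nil_infix)
  | [v0], _, hVnt, hzt =>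
    obtain ⟨r, hrr⟩ := glueAll_starts cs
    rw [hrr] at hzt
    simp only [List.cons_append, List.nil_append] at hzt
    injection hzt with e1 h2
    subst e1
    exact hVnt (List.IsInfix.trans ⟨[], [0], rfl⟩ h00)
  | [v0, v1], _, hVnt, hzt =>
    obtain ⟨r, hrr⟩ := glueAll_starts cs
    rw [hrr] at hzt
    simp only [List.cons_append, List.nil_append] at hzt
    injection hzt with e1 h2
    injection h2 with e2 h3
    subst e1; subst e2
    exact hVnt h00
  | v0 :: v1 :: v2 :: V3, hVpal, hVnt, hzt =>
    have hstart : glueAll cs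
        = 0 :: 0 :: 1 :: ([0,1,1,0,1] ++ glueAll (Lb true :: R false w')) := by
      rw [hcs2, glueAll_cons]; rfl
    rw [hstart] at hzt
    simp only [List.cons_append, List.nil_append] at hzt
    injection hzt with e1 h2
    injection h2 with e2 h3
    injection h3 with e3 h4
    subst e1; subst e2; subst e3
    have hVeq : (0:Fin 3) :: 0 :: 1 :: V3 = V3.reverse ++ [1, 0, 0] := by
      conv_lhs => rw [← hVpal]
      simp
    have hsep : glueAll cs = (V3.reverse ++ [1]) ++ [0,0] ++ t0 := by
      have h5 : (0:Fin 3) :: 0 :: 1 :: (V3 ++ t0) = glueAll cs := by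
        rw [hstart, h4]; simp
      rw [← h5]
      rw [show (0:Fin 3) :: 0 :: 1 :: (V3 ++ t0) = ((0:Fin 3) :: 0 :: 1 :: V3) ++ t0 by simp]
      rw [hVeq]
      simp [List.append_assoc]
    obtain ⟨ds, es, hsplit, hpre, hes⟩ := sep_occurrence cs hgood _ _ hsep
    have hVds : (0:Fin 3) :: 0 :: 1 :: V3 = glueAll ds := by
      rw [hVeq, glueAll, ← hpre]
      simp [List.append_assoc]
    have hds_ne : ds ≠ [] := by
      rintro rfl
      simp [glue] at hpre
    have hgood_ds : ∀ c ∈ ds, Good c := fun c hc =>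
      hgood c (by rw [hsplit]; exact List.mem_append_left _ hc)
    have hds_rev : ds.reverse = ds := by
      have h1 : glueAll ds = glueAll (ds.reverse.map List.reverse) := by
        rw [← glueAll_rev, ← hVds]
        conv_lhs => rw [← hVpal]
      have h2 : ds.reverse.map List.reverse = ds.reverse := by
        rw [List.map_congr_left (fun c hc => (hgood_ds c (List.mem_reverse.mp hc)).rev)]
        exact List.map_id ds.reverse
      rw [h2] at h1
      exact (glueAll_inj ds ds.reverse hgood_ds
        (fun c hc => hgood_ds c (List.mem_reverse.mp hc)) h1).symm
    -- occurrence machine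
    have occ : ∀ (P SS : List Word), cs = P ++ ds ++ SS → P ≠ [] → False := by
      intro P SS hsp hP
      exact hVnt (hVds ▸ glue_occurrence hsp hP)
    -- head of ds is Lb true
    have hds_head : ∃ ds', ds = Lb true :: ds' → True := ⟨[], fun _ => trivial⟩
    -- split at the w level
    rcases R_split (2 :: w') true ds es (hcs ▸ hsplit) with
      ⟨u, v, huv, hdsu⟩ | ⟨u, v, huv, hdsu⟩
    · -- case A : ds = R true u
      have hu_ne : u ≠ [] := by
        rintro rfl
        rw [R_nil] at hdsu
        exact hds_ne hdsu
      obtain ⟨a, u₂, rfl⟩ := List.exists_cons_of_ne_nil hu_ne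
      have ha : a = 2 := by
        simp only [List.cons_append] at huv
        injection huv with e he
        exact e.symm
      subst ha
      simp only [List.cons_append] at huv
      injection huv with e2 he
      have hhead_ds : ds.head? = some (Lb true) := by rw [hdsu]; rfl
      have hlast_ds : ds.getLast? = some (Lb true) := by
        rw [← List.head?_reverse, hds_rev, hhead_ds]
      have hodd : (2 :: u₂ : Word).length % 2 = 1 := by
        by_contra hev
        obtain ⟨u₃, alast, hu3⟩ : ∃ u₃ alast, (2 :: u₂ : Word) = u₃ ++ [alast] := by
          rcases List.eq_nil_or_concat (2 :: u₂ : Word) with h | ⟨u₃, alast, h⟩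
          · simp at h
          · exact ⟨u₃, alast, by simpa [List.concat_eq_append] using h⟩
        have hev' : (u₂.length + 1) % 2 = 0 := by
          simp only [List.length_cons] at hev
          omega
        have hlen : u₃.length % 2 = 1 := by
          have hl := congrArg List.length hu3
          simp at hl
          omega
        have hpar : par true u₃.length = false := by simp [par, hlen]
        have hlast2 : ds.getLast? = (blk false alast).getLast? := by
          rw [hdsu, hu3, R_append, R_single, hpar, List.getLast?_append]
          fin_cases alast <;> rfl
        rw [hlast_ds] at hlast2
        fin_cases alast <;> revert hlast2 <;> decide
      have hupal : (2 :: u₂ : Word).reverse = 2 :: u₂ := by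
        apply R_inj _ _ true
        have h6 := R_rev (2 :: u₂ : Word) true
        have hodd' : (u₂.length + 1) % 2 = 1 := by simpa using hodd
        have hp6 : par (!true) (2 :: u₂ : Word).length = true := by
          simp [par, hodd']
        rw [hp6] at h6
        rw [← h6, ← hdsu, hds_rev, hdsu]
      obtain ⟨p, s, hw_eq, hp_ne, hp_even⟩ :=
        hmc (2 :: u₂) ⟨v, by simp [he]⟩ hupal hodd
      have hpar_p : par true p.length = true := by simp [par, hp_even]
      have hsplit2 : cs = R true p ++ ds ++ R (par true (2 :: u₂ : Word).length) s := by
        have hw_eq' : (2 :: w' : Word) = p ++ ((2 :: u₂) ++ s) := by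
          rw [hw_eq, List.append_assoc]
        rw [hcs, hw_eq', R_append, hpar_p, R_append, hdsu, List.append_assoc]
      exact occ _ _ hsplit2 (R_ne_nil hp_ne)
    · -- case B : ds = R true u ++ [Lb (par true u.length)]
      cases u with
      | nil =>
        rw [R_nil, List.nil_append] at hdsu
        have hd1 : ds = [Lb true] := hdsu
        apply occ [Lb true] (R false w')
        · rw [hcs2, hd1]
          have hv : w' = v := by simpa using huv
          rfl
        · simp
      | cons a u₂ =>
        have ha : a = 2 := by
          simp only [List.cons_append] at huv
          injection huv with e _
          exact e.symm
        subst ha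
        have hhead_ds : ds.head? = some (Lb true) := by rw [hdsu]; rfl
        have hlast_ds : ds.getLast? = some (Lb (par true (2 :: u₂ : Word).length)) := by
          rw [hdsu, List.getLast?_concat]
        have heq : Lb (par true (2 :: u₂ : Word).length) = Lb true := by
          have h1 : ds.getLast? = some (Lb true) := by
            rw [← List.head?_reverse, hds_rev, hhead_ds]
          rw [hlast_ds] at h1
          injection h1 with h1'
        have hpar : par true (2 :: u₂ : Word).length = true := by
          cases hp : par true (2 :: u₂ : Word).length
          · rw [hp] at heq; exact absurd heq (by decide)
          · rfl
        have hds2 : ds = R true ((2 :: u₂) ++ [1]) := by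
          rw [R_append, hpar, R_single, hdsu, hpar]
          rfl
        have hre : (((2 : Fin 3) :: u₂) ++ [1]).reverse = (2 :: u₂) ++ [1] := by
          apply R_inj _ _ true
          have h6 := R_rev (((2 : Fin 3) :: u₂) ++ [1]) true
          have hlen1 : (((2 : Fin 3) :: u₂) ++ [1]).length % 2 = 1 := by
            have h9 := (par_true_iff (2 :: u₂ : Word).length).mp hpar
            simp only [List.length_cons, List.length_append, List.length_nil] at h9 ⊢
            omega
          have hlen1' : (u₂.length + 1 + 1) % 2 = 1 := by simpa using hlen1
          have hp6 : par (!true) (((2 : Fin 3) :: u₂) ++ [1]).length = true := by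
            simp [par, hlen1']
          rw [hp6] at h6
          rw [← h6, ← hds2, hds_rev, hds2]
        have h8 := congrArg List.head? hre
        rw [List.reverse_append] at h8
        simp at h8
end

section
/- Let x = f^ω(0). Every palindromic factor w of x has a unique palindromic extension in x: there is exactly one letter a ∈ Σ₃ such that a·w·a is a factor of x. -/
namespace PalExtAux

/-- occurrence of `u` in `x` at position `i` -/
def Occ (x : InfWord) (i : ℕ) (u : Word) : Prop :=
  ∀ k, k < u.length → u.getD k 0 = x (i + k)

lemma isFactor_iff {x : InfWord} {u : Word} : IsFactor x u ↔ ∃ i, Occ x i u := by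
  constructor
  · rintro ⟨i, hi⟩
    refine ⟨i, fun k hk => ?_⟩
    conv_lhs => rw [hi]
    rw [List.getD_eq_getElem _ _ (by simpa using hk)]
    simp
  · rintro ⟨i, hi⟩
    refine ⟨i, ?_⟩
    apply List.ext_getElem (by simp)
    intro n h1 h2
    have := hi n h1
    rw [List.getD_eq_getElem _ _ h1] at this
    simp only [List.length_map, List.length_range, List.getElem_map, List.getElem_range]
    exact this

lemma occ_nil {x : InfWord} {i : ℕ} : Occ x i [] := by intro k hk; simp at hk

lemma occ_cons {x : InfWord} {i : ℕ} {a : Fin 3} {u : Word} :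
    Occ x i (a :: u) ↔ a = x i ∧ Occ x (i+1) u := by
  constructor
  · intro h
    refine ⟨by simpa using h 0 (by simp), fun k hk => ?_⟩
    have := h (k+1) (by simpa using hk)
    simpa [Nat.add_comm, Nat.add_assoc, Nat.add_left_comm] using this
  · rintro ⟨h0, h⟩ k hk
    match k with
    | 0 => simpa using h0
    | k+1 =>
      have := h k (by simpa using hk)
      rw [List.getD_cons_succ, this]
      ring_nf

lemma occ_append {x : InfWord} {i : ℕ} {u v : Word} :
    Occ x i (u ++ v) ↔ Occ x i u ∧ Occ x (i + u.length) v := by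
  constructor
  · intro h
    constructor
    · intro k hk
      have := h k (by simp; omega)
      rwa [List.getD_append _ _ _ _ hk] at this
    · intro k hk
      have := h (u.length + k) (by simp; omega)
      rw [List.getD_append_right _ _ _ _ (by omega)] at this
      simpa [Nat.add_assoc, Nat.add_sub_cancel_left] using this
  · rintro ⟨h1, h2⟩ k hk
    rcases Nat.lt_or_ge k u.length with hk' | hk'
    · rw [List.getD_append _ _ _ _ hk']; exact h1 k hk'
    · rw [List.getD_append_right _ _ _ _ hk']
      have := h2 (k - u.length) (by simp at hk; omega)
      rw [this]
      congr 1
      omega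

lemma occ_singleton {x : InfWord} {i : ℕ} {a : Fin 3} :
    Occ x i [a] ↔ a = x i := by
  rw [occ_cons]; simp [occ_nil]

lemma occ_unique {x : InfWord} {i : ℕ} {u v : Word} (hu : Occ x i u) (hv : Occ x i v)
    (hl : u.length = v.length) : u = v := by
  apply List.ext_getElem hl
  intro n h1 h2
  have e1 := hu n h1
  have e2 := hv n h2
  rw [List.getD_eq_getElem _ _ h1] at e1
  rw [List.getD_eq_getElem _ _ h2] at e2
  rw [e1, e2]

lemma fin3 (a : Fin 3) : a = 0 ∨ a = 1 ∨ a = 2 := by omega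

@[simp] lemma fm0 : fm 0 = [0,1] := rfl
@[simp] lemma fm1 : fm 1 = [0,2,2] := rfl
@[simp] lemma fm2 : fm 2 = [0,2] := rfl

lemma fm_len_ge (a : Fin 3) : 2 ≤ (fm a).length := by
  rcases fin3 a with h|h|h <;> subst h <;> decide

@[simp] lemma fList_nil : fList [] = [] := rfl
lemma fList_cons (a : Fin 3) (t : Word) : fList (a :: t) = fm a ++ fList t :=
  List.flatMap_cons
lemma fList_append (u v : Word) : fList (u ++ v) = fList u ++ fList v :=
  List.flatMap_append

lemma fList_len_ge (u : Word) : u.length ≤ (fList u).length := by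
  induction u with
  | nil => simp
  | cons a t ih =>
    rw [fList_cons]
    simp only [List.length_append, List.length_cons]
    have := fm_len_ge a
    omega

/-- prefix of `x` of length `n` -/
def pfx (x : InfWord) (n : ℕ) : Word := (List.range n).map x

lemma pfx_succ (x : InfWord) (n : ℕ) : pfx x (n+1) = pfx x n ++ [x n] := by
  simp [pfx, List.range_succ]

lemma pfx_flat_len (x : InfWord) (n : ℕ) : 2 * n ≤ (fList (pfx x n)).length := by
  induction n with
  | zero => simp [pfx]
  | succ n ih =>
    rw [pfx_succ, fList_append]
    simp only [List.length_append]
    have h2 := fm_len_ge (x n)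
    simp [fList_cons]
    omega

lemma pfx_flat_len_mono (x : InfWord) {n m : ℕ} (h : n ≤ m) :
    (fList (pfx x n)).length ≤ (fList (pfx x m)).length := by
  induction m with
  | zero =>
    have : n = 0 := by omega
    subst this; exact le_refl _
  | succ m ih =>
    rcases Nat.lt_or_ge n (m+1) with h' | h'
    · rw [pfx_succ x m, fList_append]
      simp only [List.length_append]
      have := ih (by omega)
      omega
    · have : n = m + 1 := by omega
      subst this; exact le_refl _

lemma pfx_flat_prefix (x : InfWord) {n m : ℕ} (h : n ≤ m) {i : ℕ}
    (hi : i < (fList (pfx x n)).length) :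
    (fList (pfx x m)).getD i 0 = (fList (pfx x n)).getD i 0 := by
  induction m with
  | zero =>
    have : n = 0 := by omega
    subst this; rfl
  | succ m ih =>
    rcases Nat.lt_or_ge n (m+1) with h' | h'
    · have hnm : n ≤ m := by omega
      rw [pfx_succ, fList_append, List.getD_append]
      · exact ih hnm
      · exact lt_of_lt_of_le hi (pfx_flat_len_mono x hnm)
    · have : n = m + 1 := by omega
      subst this; rfl

lemma keyA {x : InfWord} (hfix : fInf x = x) {n i : ℕ}
    (hi : i < (fList (pfx x n)).length) :
    (fList (pfx x n)).getD i 0 = x i := by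
  have hx : x i = (fList (pfx x (i+1))).getD i 0 := (congrFun hfix i).symm
  have hilen : i < (fList (pfx x (i+1))).length := by
    have := pfx_flat_len x (i+1); omega
  rcases le_or_gt n (i+1) with h | h
  · rw [pfx_flat_prefix x h hi] at hx
    exact hx.symm
  · rw [hx, pfx_flat_prefix x (by omega : i+1 ≤ n) hilen]

end PalExtAux

namespace PalExtAux

/-- starting position of the `j`-th block of `x` -/
def Bk (x : InfWord) : ℕ → ℕ
  | 0 => 0
  | j+1 => Bk x j + (fm (x j)).length

lemma Bk_eq (x : InfWord) (j : ℕ) : Bk x j = (fList (pfx x j)).length := by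
  induction j with
  | zero => simp [Bk, pfx]
  | succ j ih =>
    rw [pfx_succ, fList_append]
    simp only [List.length_append]
    rw [Bk, ih, fList_cons]
    simp

lemma blockval {x : InfWord} (hfix : fInf x = x) (j : ℕ) {k : ℕ}
    (hk : k < (fm (x j)).length) : x (Bk x j + k) = (fm (x j)).getD k 0 := by
  have h1 : Bk x j + k < (fList (pfx x (j+1))).length := by
    rw [pfx_succ, fList_append]
    simp only [List.length_append]
    rw [← Bk_eq]
    have : (fList [x j]).length = (fm (x j)).length := by simp [fList_cons]
    omega
  rw [← keyA hfix h1, pfx_succ, fList_append, List.getD_append_right _ _ _ _ (by rw [← Bk_eq]; omega)]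
  rw [← Bk_eq]
  simp only [Nat.add_sub_cancel_left]
  simp [fList_cons]

lemma fm_getD0 : ∀ a : Fin 3, (fm a).getD 0 0 = 0 := by decide

lemma xB0 {x : InfWord} (hfix : fInf x = x) (j : ℕ) : x (Bk x j) = 0 := by
  have := blockval hfix j (k := 0) (by have := fm_len_ge (x j); omega)
  rw [fm_getD0] at this
  simpa using this

lemma blk0 {x : InfWord} (hfix : fInf x = x) {j : ℕ} (h : x j = 0) :
    Bk x (j+1) = Bk x j + 2 ∧ x (Bk x j + 1) = 1 := by
  constructor
  · show Bk x j + (fm (x j)).length = _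
    rw [h]; rfl
  · have := blockval hfix j (k := 1) (by rw [h]; decide)
    rw [h] at this; exact this

lemma blk1 {x : InfWord} (hfix : fInf x = x) {j : ℕ} (h : x j = 1) :
    Bk x (j+1) = Bk x j + 3 ∧ x (Bk x j + 1) = 2 ∧ x (Bk x j + 2) = 2 := by
  refine ⟨?_, ?_, ?_⟩
  · show Bk x j + (fm (x j)).length = _
    rw [h]; rfl
  · have := blockval hfix j (k := 1) (by rw [h]; decide)
    rw [h] at this; exact this
  · have := blockval hfix j (k := 2) (by rw [h]; decide)
    rw [h] at this; exact this

lemma blk2 {x : InfWord} (hfix : fInf x = x) {j : ℕ} (h : x j = 2) :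
    Bk x (j+1) = Bk x j + 2 ∧ x (Bk x j + 1) = 2 := by
  constructor
  · show Bk x j + (fm (x j)).length = _
    rw [h]; rfl
  · have := blockval hfix j (k := 1) (by rw [h]; decide)
    rw [h] at this; exact this

lemma Bk_lt (x : InfWord) (j : ℕ) : Bk x j < Bk x (j+1) := by
  show Bk x j < Bk x j + (fm (x j)).length
  have := fm_len_ge (x j); omega

lemma Bk_mono (x : InfWord) : StrictMono (Bk x) :=
  strictMono_nat_of_lt_succ (Bk_lt x)

lemma Bk_inj {x : InfWord} {j j' : ℕ} (h : Bk x j = Bk x j') : j = j' :=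
  (Bk_mono x).injective h

lemma find_block (x : InfWord) (i : ℕ) : ∃ j, Bk x j ≤ i ∧ i < Bk x (j+1) := by
  induction i with
  | zero => exact ⟨0, le_refl _, Bk_lt x 0⟩
  | succ i ih =>
    obtain ⟨j, h1, h2⟩ := ih
    rcases Nat.lt_or_ge (i+1) (Bk x (j+1)) with h | h
    · exact ⟨j, by omega, h⟩
    · have : i + 1 = Bk x (j+1) := by omega
      exact ⟨j+1, by omega, by rw [this]; exact Bk_lt x (j+1)⟩

lemma xpos {x : InfWord} (hfix : fInf x = x) (i : ℕ) :
    ∃ j k, i = Bk x j + k ∧ k < (fm (x j)).length ∧ x i = (fm (x j)).getD k 0 := by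
  obtain ⟨j, h1, h2⟩ := find_block x i
  have hb : Bk x (j+1) = Bk x j + (fm (x j)).length := rfl
  refine ⟨j, i - Bk x j, by omega, by omega, ?_⟩
  have := blockval hfix j (k := i - Bk x j) (by omega)
  rw [← this]
  congr 1
  omega

lemma fm_zero_pos : ∀ (a : Fin 3) (k : ℕ), k < (fm a).length → (fm a).getD k 0 = 0 → k = 0 := by decide
lemma fm_one_pos : ∀ (a : Fin 3) (k : ℕ), k < (fm a).length → (fm a).getD k 0 = 1 → (a = 0 ∧ k = 1) := by decide
lemma fm_two_pos : ∀ (a : Fin 3) (k : ℕ), k < (fm a).length → (fm a).getD k 0 = 2 →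
    ((k = 1 ∧ (a = 1 ∨ a = 2)) ∨ (k = 2 ∧ a = 1)) := by decide

lemma zero_block {x : InfWord} (hfix : fInf x = x) {i : ℕ} (h : x i = 0) :
    ∃ j, i = Bk x j := by
  obtain ⟨j, k, hi, hk, hv⟩ := xpos hfix i
  have := fm_zero_pos (x j) k hk (by rw [← hv, h])
  exact ⟨j, by omega⟩

lemma letter1 {x : InfWord} (hfix : fInf x = x) {i : ℕ} (h : x i = 1) :
    ∃ j, i = Bk x j + 1 ∧ x j = 0 := by
  obtain ⟨j, k, hi, hk, hv⟩ := xpos hfix i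
  have := fm_one_pos (x j) k hk (by rw [← hv, h])
  exact ⟨j, by omega, this.1⟩

lemma letter2 {x : InfWord} (hfix : fInf x = x) {i : ℕ} (h : x i = 2) :
    ∃ j, (i = Bk x j + 1 ∧ (x j = 1 ∨ x j = 2)) ∨ (i = Bk x j + 2 ∧ x j = 1) := by
  obtain ⟨j, k, hi, hk, hv⟩ := xpos hfix i
  have := fm_two_pos (x j) k hk (by rw [← hv, h])
  rcases this with ⟨hk1, ha⟩ | ⟨hk2, ha⟩
  · exact ⟨j, Or.inl ⟨by omega, ha⟩⟩
  · exact ⟨j, Or.inr ⟨by omega, ha⟩⟩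

/-- after a 1 comes a 0, before it a 0 -/
lemma one1 {x : InfWord} (hfix : fInf x = x) {i : ℕ} (h : x i = 1) :
    ∃ j, i = Bk x j + 1 ∧ x j = 0 ∧ x (Bk x j) = 0 ∧ x (i+1) = 0 := by
  obtain ⟨j, hi, hj⟩ := letter1 hfix h
  obtain ⟨hb, -⟩ := blk0 hfix hj
  refine ⟨j, hi, hj, xB0 hfix j, ?_⟩
  have : i + 1 = Bk x (j+1) := by omega
  rw [this]; exact xB0 hfix (j+1)

lemma pair22 {x : InfWord} (hfix : fInf x = x) {i : ℕ} (h : x i = 2) (h' : x (i+1) = 2) :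
    ∃ j, i = Bk x j + 1 ∧ x j = 1 ∧ x (Bk x j) = 0 ∧ x (i+2) = 0 := by
  obtain ⟨j, hc⟩ := letter2 hfix h
  rcases hc with ⟨hi, hj12⟩ | ⟨hi, hj1⟩
  · rcases hj12 with hj | hj
    · obtain ⟨hb, -, -⟩ := blk1 hfix hj
      refine ⟨j, hi, hj, xB0 hfix j, ?_⟩
      have : i + 2 = Bk x (j+1) := by omega
      rw [this]; exact xB0 hfix (j+1)
    · obtain ⟨hb, -⟩ := blk2 hfix hj
      exfalso
      have : i + 1 = Bk x (j+1) := by omega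
      rw [this, xB0 hfix (j+1)] at h'
      exact absurd h' (by decide)
  · obtain ⟨hb, -, -⟩ := blk1 hfix hj1
    exfalso
    have : i + 1 = Bk x (j+1) := by omega
    rw [this, xB0 hfix (j+1)] at h'
    exact absurd h' (by decide)

lemma no00 {x : InfWord} (hfix : fInf x = x) {i : ℕ} (h : x i = 0) (h' : x (i+1) = 0) : False := by
  obtain ⟨j, hi⟩ := zero_block hfix h
  have hlen := fm_len_ge (x j)
  have hb := blockval hfix j (k := 1) (by omega)
  rw [← hi, h'] at hb
  have hne : ∀ a : Fin 3, (fm a).getD 1 0 ≠ 0 := by decide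
  exact hne (x j) hb.symm

lemma no11 {x : InfWord} (hfix : fInf x = x) {i : ℕ} (h : x i = 1) (h' : x (i+1) = 1) : False := by
  obtain ⟨j, -, -, -, h0'⟩ := one1 hfix h
  rw [h'] at h0'
  exact absurd h0' (by decide)

lemma no12 {x : InfWord} (hfix : fInf x = x) {i : ℕ} (h : x i = 1) (h' : x (i+1) = 2) : False := by
  obtain ⟨j, -, -, -, h0'⟩ := one1 hfix h
  rw [h'] at h0'
  exact absurd h0' (by decide)

lemma no21 {x : InfWord} (hfix : fInf x = x) {i : ℕ} (h : x i = 2) (h' : x (i+1) = 1) : False := by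
  obtain ⟨j, hi, -, hB0, -⟩ := one1 hfix h'
  have : i = Bk x j := by omega
  rw [this, hB0] at h
  exact absurd h (by decide)

lemma no222 {x : InfWord} (hfix : fInf x = x) {i : ℕ} (h : x i = 2) (h' : x (i+1) = 2)
    (h'' : x (i+2) = 2) : False := by
  obtain ⟨j, -, -, -, h0'⟩ := pair22 hfix h h'
  rw [h''] at h0'
  exact absurd h0' (by decide)

end PalExtAux

namespace PalExtAux

lemma occ_fList {x : InfWord} (hfix : fInf x = x) :
    ∀ (v : Word) (j : ℕ), Occ x j v →
      Occ x (Bk x j) (fList v) ∧ Bk x (j + v.length) = Bk x j + (fList v).length := by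
  intro v
  induction v with
  | nil => intro j _; simpa using occ_nil
  | cons a t ih =>
    intro j hocc
    rw [occ_cons] at hocc
    obtain ⟨ha, ht⟩ := hocc
    obtain ⟨iht, ihl⟩ := ih (j+1) ht
    have hfm : Occ x (Bk x j) (fm a) := by
      intro k hk
      rw [ha] at hk ⊢
      exact (blockval hfix j hk).symm
    have hstep : Bk x (j+1) = Bk x j + (fm a).length := by
      show Bk x j + (fm (x j)).length = _
      rw [ha]
    constructor
    · rw [fList_cons, occ_append]
      refine ⟨hfm, ?_⟩
      rw [← hstep]
      exact iht
    · rw [fList_cons]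
      simp only [List.length_cons, List.length_append]
      have : j + (t.length + 1) = (j+1) + t.length := by omega
      rw [this, ihl, hstep]
      omega

lemma flat_head0 (t : Word) : (fList t ++ [0]).getD 0 0 = 0 := by
  cases t with
  | nil => rfl
  | cons a t' =>
    rw [fList_cons, List.append_assoc, List.getD_append _ _ _ _ (by have := fm_len_ge a; omega)]
    exact fm_getD0 a

lemma master {x : InfWord} (hfix : fInf x = x) :
    ∀ (v : Word) (i : ℕ), Occ x i (fList v ++ [0]) →
      ∃ j, i = Bk x j ∧ Occ x j v := by
  intro v
  induction v with
  | nil =>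
    intro i h
    simp only [fList_nil, List.nil_append] at h
    rw [occ_singleton] at h
    obtain ⟨j, hj⟩ := zero_block hfix h.symm
    exact ⟨j, hj, occ_nil⟩
  | cons a t ih =>
    intro i h
    rw [fList_cons, List.append_assoc] at h
    rw [occ_append] at h
    obtain ⟨hfm, htail⟩ := h
    have hx0 : x i = 0 := by
      have := hfm 0 (by have := fm_len_ge a; omega)
      rw [fm_getD0 a] at this
      simpa using this.symm
    obtain ⟨j, hij⟩ := zero_block hfix hx0
    -- letters of the pattern
    have hi1 : x (i+1) = (fm a).getD 1 0 := by
      have := hfm 1 (by have := fm_len_ge a; omega)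
      exact this.symm
    -- determine x j = a
    have hxj : x j = a := by
      rcases fin3 a with ha|ha|ha <;> subst ha
      · -- a = 0 : x(i+1) = 1
        rcases fin3 (x j) with hb|hb|hb
        · exact hb
        · exfalso
          obtain ⟨-, h1, -⟩ := blk1 hfix hb
          rw [← hij] at h1
          rw [h1] at hi1
          exact absurd hi1 (by decide)
        · exfalso
          obtain ⟨-, h1⟩ := blk2 hfix hb
          rw [← hij] at h1
          rw [h1] at hi1
          exact absurd hi1 (by decide)
      · -- a = 1 : x(i+1) = 2, x(i+2) = 2
        have hi2 : x (i+2) = 2 := by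
          have := hfm 2 (by decide)
          simpa using this.symm
        rcases fin3 (x j) with hb|hb|hb
        · exfalso
          obtain ⟨-, h1⟩ := blk0 hfix hb
          rw [← hij] at h1
          rw [h1] at hi1
          exact absurd hi1 (by decide)
        · exact hb
        · exfalso
          obtain ⟨hB, -⟩ := blk2 hfix hb
          have : i + 2 = Bk x (j+1) := by omega
          rw [this, xB0 hfix (j+1)] at hi2
          exact absurd hi2 (by decide)
      · -- a = 2 : x(i+1) = 2, x(i+2) = 0
        have hi2 : x (i+2) = 0 := by
          have := htail 0 (by simp)
          rw [flat_head0] at this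
          have hlen : (fm (2:Fin 3)).length = 2 := by decide
          rw [hlen] at this
          simpa using this.symm
        rcases fin3 (x j) with hb|hb|hb
        · exfalso
          obtain ⟨-, h1⟩ := blk0 hfix hb
          rw [← hij] at h1
          rw [h1] at hi1
          exact absurd hi1 (by decide)
        · exfalso
          obtain ⟨hB, -, h2⟩ := blk1 hfix hb
          rw [← hij] at h2
          rw [h2] at hi2
          exact absurd hi2 (by decide)
        · exact hb
    -- recurse on tail
    have hnext : i + (fm a).length = Bk x (j+1) := by
      show _ = Bk x j + (fm (x j)).length
      rw [hxj, hij]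
    rw [hnext] at htail
    obtain ⟨j', hj', hoccj'⟩ := ih (Bk x (j+1)) htail
    have : j' = j + 1 := Bk_inj hj'.symm
    subst this
    refine ⟨j, hij, ?_⟩
    rw [occ_cons]
    exact ⟨hxj.symm, hoccj'⟩

lemma fm_rev : ∀ a : Fin 3, (0 : Fin 3) :: (fm a).reverse = fm a ++ [0] := by decide

lemma rev_fList : ∀ v : Word, (fList v ++ [0]).reverse = fList v.reverse ++ [0] := by
  intro v
  induction v with
  | nil => rfl
  | cons a t ih =>
    rw [fList_cons, List.append_assoc, List.reverse_append]
    rw [ih]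
    rw [List.reverse_cons, fList_append]
    simp only [List.append_assoc]
    congr 1
    have : fList [a] = fm a := by simp [fList_cons]
    rw [this]
    rw [← fm_rev a]
    rfl

lemma fList_getD0 {s : Word} (hs : s ≠ []) : (fList s).getD 0 0 = 0 := by
  cases s with
  | nil => exact absurd rfl hs
  | cons a t =>
    rw [fList_cons, List.getD_append _ _ _ _ (by have := fm_len_ge a; omega)]
    exact fm_getD0 a

lemma fList_inj : ∀ u v : Word, fList u = fList v → u = v := by
  intro u
  induction u with
  | nil =>
    intro v h
    cases v with
    | nil => rfl
    | cons b s =>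
      exfalso
      rw [fList_cons] at h
      have hl := congrArg List.length h
      simp only [fList_nil, List.length_nil, List.length_append] at hl
      have := fm_len_ge b
      omega
  | cons a t ih =>
    intro v h
    cases v with
    | nil =>
      exfalso
      rw [fList_cons] at h
      have hl := congrArg List.length h
      simp only [fList_nil, List.length_nil, List.length_append] at hl
      have := fm_len_ge a
      omega
    | cons b s =>
      rw [fList_cons, fList_cons] at h
      have key12 : ∀ (X : Word) (Y : Word), ([0,2,2] : Word) ++ X = [0,2] ++ fList Y → False := by
        intro X Y hXY
        simp only [List.cons_append, List.nil_append, List.cons.injEq] at hXY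
        obtain ⟨-, -, hXY⟩ := hXY
        cases Y with
        | nil =>
          rw [fList_nil] at hXY
          exact absurd hXY (by simp)
        | cons c Y' =>
          have h0 := fList_getD0 (s := c :: Y') (by simp)
          rw [← hXY] at h0
          simp at h0
      have key01 : ∀ (X Y : Word), ([0,1] : Word) ++ X = [0,2] ++ Y → False := by
        intro X Y hXY
        simp only [List.cons_append, List.nil_append, List.cons.injEq] at hXY
        exact absurd hXY.2.1 (by decide)
      have key01' : ∀ (X Y : Word), ([0,1] : Word) ++ X = [0,2,2] ++ Y → False := by
        intro X Y hXY
        simp only [List.cons_append, List.nil_append, List.cons.injEq] at hXY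
        exact absurd hXY.2.1 (by decide)
      have hab : a = b := by
        rcases fin3 a with ha|ha|ha <;> subst ha <;> rcases fin3 b with hb|hb|hb <;> subst hb
        · rfl
        · rw [fm0, fm1] at h; exact absurd h (fun hh => key01' (fList t) (fList s) hh)
        · rw [fm0, fm2] at h; exact absurd h (fun hh => key01 (fList t) (fList s) hh)
        · rw [fm1, fm0] at h; exact absurd h.symm (fun hh => key01' (fList s) (fList t) hh)
        · rfl
        · rw [fm1, fm2] at h; exact absurd h (fun hh => key12 (fList t) s hh)
        · rw [fm2, fm0] at h; exact absurd h.symm (fun hh => key01 (fList s) (fList t) hh)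
        · rw [fm2, fm1] at h; exact absurd h.symm (fun hh => key12 (fList s) t hh)
        · rfl
      subst hab
      have htail : fList t = fList s := by
        exact List.append_cancel_left h
      rw [ih s htail]

end PalExtAux

namespace PalExtAux

lemma xval {x : InfWord} (hfix : fInf x = x) (i : ℕ) (hi : 1 ≤ i) :
    x i = (fList (pfx x i)).getD i 0 := by
  have h : x i = (fList (pfx x (i+1))).getD i 0 := (congrFun hfix i).symm
  rw [pfx_succ, fList_append] at h
  rw [h, List.getD_append]
  have := pfx_flat_len x i
  omega

lemma pfx1 {x : InfWord} (h0 : x 0 = 0) : pfx x 1 = [0] := by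
  rw [pfx_succ]; simp [pfx, h0]

lemma xv1 {x : InfWord} (hfix : fInf x = x) (h0 : x 0 = 0) : x 1 = 1 := by
  rw [xval hfix 1 (by omega), pfx1 h0]; decide

lemma pfx2 {x : InfWord} (hfix : fInf x = x) (h0 : x 0 = 0) : pfx x 2 = [0,1] := by
  rw [pfx_succ, pfx1 h0, xv1 hfix h0]; rfl

lemma xv2 {x : InfWord} (hfix : fInf x = x) (h0 : x 0 = 0) : x 2 = 0 := by
  rw [xval hfix 2 (by omega), pfx2 hfix h0]; decide

lemma pfx3 {x : InfWord} (hfix : fInf x = x) (h0 : x 0 = 0) : pfx x 3 = [0,1,0] := by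
  rw [pfx_succ, pfx2 hfix h0, xv2 hfix h0]; rfl

lemma xv3 {x : InfWord} (hfix : fInf x = x) (h0 : x 0 = 0) : x 3 = 2 := by
  rw [xval hfix 3 (by omega), pfx3 hfix h0]; decide

lemma pfx4 {x : InfWord} (hfix : fInf x = x) (h0 : x 0 = 0) : pfx x 4 = [0,1,0,2] := by
  rw [pfx_succ, pfx3 hfix h0, xv3 hfix h0]; rfl

lemma xv4 {x : InfWord} (hfix : fInf x = x) (h0 : x 0 = 0) : x 4 = 2 := by
  rw [xval hfix 4 (by omega), pfx4 hfix h0]; decide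

lemma pfx5 {x : InfWord} (hfix : fInf x = x) (h0 : x 0 = 0) : pfx x 5 = [0,1,0,2,2] := by
  rw [pfx_succ, pfx4 hfix h0, xv4 hfix h0]; rfl

lemma xv5 {x : InfWord} (hfix : fInf x = x) (h0 : x 0 = 0) : x 5 = 0 := by
  rw [xval hfix 5 (by omega), pfx5 hfix h0]; decide

lemma pfx6 {x : InfWord} (hfix : fInf x = x) (h0 : x 0 = 0) : pfx x 6 = [0,1,0,2,2,0] := by
  rw [pfx_succ, pfx5 hfix h0, xv5 hfix h0]; rfl

lemma xv6 {x : InfWord} (hfix : fInf x = x) (h0 : x 0 = 0) : x 6 = 1 := by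
  rw [xval hfix 6 (by omega), pfx6 hfix h0]; decide

lemma pfx7 {x : InfWord} (hfix : fInf x = x) (h0 : x 0 = 0) : pfx x 7 = [0,1,0,2,2,0,1] := by
  rw [pfx_succ, pfx6 hfix h0, xv6 hfix h0]; rfl

lemma xv7 {x : InfWord} (hfix : fInf x = x) (h0 : x 0 = 0) : x 7 = 0 := by
  rw [xval hfix 7 (by omega), pfx7 hfix h0]; decide

lemma pfx8 {x : InfWord} (hfix : fInf x = x) (h0 : x 0 = 0) : pfx x 8 = [0,1,0,2,2,0,1,0] := by
  rw [pfx_succ, pfx7 hfix h0, xv7 hfix h0]; rfl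

lemma xv8 {x : InfWord} (hfix : fInf x = x) (h0 : x 0 = 0) : x 8 = 2 := by
  rw [xval hfix 8 (by omega), pfx8 hfix h0]; decide

lemma pfx9 {x : InfWord} (hfix : fInf x = x) (h0 : x 0 = 0) : pfx x 9 = [0,1,0,2,2,0,1,0,2] := by
  rw [pfx_succ, pfx8 hfix h0, xv8 hfix h0]; rfl

lemma xv9 {x : InfWord} (hfix : fInf x = x) (h0 : x 0 = 0) : x 9 = 0 := by
  rw [xval hfix 9 (by omega), pfx9 hfix h0]; decide

lemma mem22 {x : InfWord} (hfix : fInf x = x) (h0 : x 0 = 0) : IsFactor x [2,2] := by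
  rw [isFactor_iff]
  refine ⟨3, fun k hk => ?_⟩
  have hk' : k < 2 := by simpa using hk
  interval_cases k
  · simpa using (xv3 hfix h0).symm
  · simpa using (xv4 hfix h0).symm

lemma mem020 {x : InfWord} (hfix : fInf x = x) (h0 : x 0 = 0) : IsFactor x [0,2,0] := by
  rw [isFactor_iff]
  refine ⟨7, fun k hk => ?_⟩
  have hk' : k < 3 := by simpa using hk
  interval_cases k
  · simpa using (xv7 hfix h0).symm
  · simpa using (xv8 hfix h0).symm
  · simpa using (xv9 hfix h0).symm

/-- desubstitution: a factor starting and ending with 0 is `f(v)0` -/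
lemma desub {x : InfWord} (hfix : fInf x = x) {i : ℕ} {w : Word}
    (hocc : Occ x i w) (hlen : 1 ≤ w.length)
    (h1 : x i = 0) (h2 : x (i + (w.length - 1)) = 0) :
    ∃ v j, i = Bk x j ∧ Occ x j v ∧ w = fList v ++ [0] ∧ v.length < w.length := by
  obtain ⟨j, hij⟩ := zero_block hfix h1
  obtain ⟨j', hij'⟩ := zero_block hfix h2
  have hjj : j ≤ j' := by
    by_contra hcon
    have := Bk_mono x (show j' < j by omega)
    omega
  set v : Word := (List.range (j' - j)).map (fun k => x (j + k)) with hv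
  have hvocc : Occ x j v := by
    intro k hk
    simp only [hv, List.length_map, List.length_range] at hk
    rw [List.getD_eq_getElem _ _ (by simpa [hv] using hk)]
    simp [hv]
  have hvlen : v.length = j' - j := by simp [hv]
  obtain ⟨hFocc, hBs⟩ := occ_fList hfix v j hvocc
  have hBj' : Bk x j' = Bk x j + (fList v).length := by
    rw [← hBs]
    congr 1
    omega
  have hflen : (fList v).length = w.length - 1 := by omega
  have hocc2 : Occ x i (fList v ++ [0]) := by
    rw [occ_append]
    constructor
    · rw [hij]; exact hFocc
    · rw [occ_singleton, hflen]
      exact h2.symm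
  have hw : w = fList v ++ [0] := by
    apply occ_unique hocc hocc2
    simp only [List.length_append, List.length_cons, List.length_nil]
    omega
  refine ⟨v, j, hij, hvocc, hw, ?_⟩
  have := fList_len_ge v
  omega

lemma pal_desub {v : Word} (h : (fList v ++ [0]).reverse = fList v ++ [0]) :
    v.reverse = v := by
  rw [rev_fList] at h
  have := (List.append_left_inj [0]).1 h
  exact fList_inj _ _ this

/-- destructure occurrence of `a ++ f(v) ++ 0 ++ b` patterns -/
lemma occ_pat1 {x : InfWord} {q : ℕ} {F : Word} {a b : Fin 3} :
    Occ x q (a :: ((F ++ [0]) ++ [b])) ↔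
      a = x q ∧ Occ x (q+1) (F ++ [0]) ∧ b = x (q + 2 + F.length) := by
  rw [occ_cons, occ_append, occ_singleton]
  have e : q + 1 + (F ++ [0]).length = q + 2 + F.length := by simp only [List.length_append, List.length_cons, List.length_nil]; omega
  rw [e]

lemma occ_pat2 {x : InfWord} {q : ℕ} {F : Word} {a b c d : Fin 3} :
    Occ x q (a :: ((c :: ((F ++ [0]) ++ [d])) ++ [b])) ↔
      a = x q ∧ c = x (q+1) ∧ Occ x (q+2) (F ++ [0]) ∧ d = x (q + 3 + F.length) ∧
        b = x (q + 4 + F.length) := by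
  rw [occ_cons, occ_append, occ_singleton, occ_cons, occ_append, occ_singleton]
  have e1 : q + 1 + (c :: ((F ++ [0]) ++ [d])).length = q + 4 + F.length := by simp only [List.length_append, List.length_cons, List.length_nil]; omega
  have e2 : q + 1 + 1 = q + 2 := by omega
  have e3 : q + 1 + 1 + (F ++ [0]).length = q + 3 + F.length := by simp only [List.length_append, List.length_cons, List.length_nil]; omega
  rw [e1, e2, e3]
  tauto

lemma first_two {x : InfWord} {q : ℕ} {b e : Fin 3} {w : Word} (hlen : 0 < w.length)
    (hocc : Occ x q (b :: (w ++ [e]))) : b = x q ∧ w.getD 0 0 = x (q+1) := by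
  rw [occ_cons, occ_append] at hocc
  exact ⟨hocc.1, hocc.2.1 0 hlen⟩

lemma first_three {x : InfWord} {q : ℕ} {b e : Fin 3} {w : Word} (hlen : 1 < w.length)
    (hocc : Occ x q (b :: (w ++ [e]))) :
    b = x q ∧ w.getD 0 0 = x (q+1) ∧ w.getD 1 0 = x (q+2) := by
  rw [occ_cons, occ_append] at hocc
  refine ⟨hocc.1, hocc.2.1 0 (by omega), ?_⟩
  have := hocc.2.1 1 hlen
  rwa [show q + 1 + 1 = q + 2 by omega] at this

lemma last_letter {x : InfWord} {q : ℕ} {b e : Fin 3} {w : Word}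
    (hocc : Occ x q (b :: (w ++ [e]))) : e = x (q + 1 + w.length) := by
  rw [occ_cons, occ_append, occ_singleton] at hocc
  exact hocc.2.2

end PalExtAux

namespace PalExtAux

lemma occF0 {x : InfWord} (hfix : fInf x = x) {v : Word} {j : ℕ} (hvocc : Occ x j v) :
    Occ x (Bk x j) (fList v ++ [0]) := by
  rw [occ_append, occ_singleton]
  obtain ⟨hF, hBs⟩ := occ_fList hfix v j hvocc
  refine ⟨hF, ?_⟩
  rw [← hBs]
  exact (xB0 hfix _).symm

lemma e1 {x : InfWord} (hfix : fInf x = x) (v : Word) :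
    IsFactor x (1 :: ((fList v ++ [0]) ++ [1])) ↔ IsFactor x (0 :: (v ++ [0])) := by
  constructor
  · intro h
    rw [isFactor_iff] at h ⊢
    obtain ⟨q, hq⟩ := h
    rw [occ_pat1] at hq
    obtain ⟨h1, hF0, h4⟩ := hq
    obtain ⟨j, hij, hvocc⟩ := master hfix v (q+1) hF0
    obtain ⟨j₀, hqj₀, hxj₀⟩ := letter1 hfix h1.symm
    obtain ⟨hB0, -⟩ := blk0 hfix hxj₀
    have hjj : j₀ + 1 = j := Bk_inj (x := x) (by omega)
    have hBs := (occ_fList hfix v j hvocc).2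
    have h4' : x (Bk x (j + v.length) + 1) = 1 := by
      rw [hBs, show Bk x j + (fList v).length + 1 = q + 2 + (fList v).length by omega]
      exact h4.symm
    obtain ⟨j₂, hj₂, hxj₂⟩ := letter1 hfix h4'
    have hj₂' : j + v.length = j₂ := Bk_inj (x := x) (by omega)
    refine ⟨j₀, ?_⟩
    rw [occ_cons, occ_append, occ_singleton]
    refine ⟨hxj₀.symm, ?_, ?_⟩
    · rw [hjj]; exact hvocc
    · rw [show j₀ + 1 + v.length = j₂ by omega]
      exact hxj₂.symm
  · intro h
    rw [isFactor_iff] at h ⊢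
    obtain ⟨p, hp⟩ := h
    rw [occ_cons, occ_append, occ_singleton] at hp
    obtain ⟨h1, hvocc, h3⟩ := hp
    obtain ⟨hBp, hBp1⟩ := blk0 hfix h1.symm
    have hxm : x (p + 1 + v.length) = 0 := h3.symm
    obtain ⟨hBm, hBm1⟩ := blk0 hfix hxm
    have hBs := (occ_fList hfix v (p+1) hvocc).2
    refine ⟨Bk x p + 1, ?_⟩
    rw [occ_pat1]
    refine ⟨hBp1.symm, ?_, ?_⟩
    · rw [show Bk x p + 1 + 1 = Bk x (p+1) by omega]
      exact occF0 hfix hvocc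
    · rw [show Bk x p + 1 + 2 + (fList v).length = Bk x (p + 1 + v.length) + 1 by omega]
      exact hBm1.symm

lemma e2 {x : InfWord} (hfix : fInf x = x) (v : Word) :
    IsFactor x (2 :: ((fList v ++ [0]) ++ [2])) ↔
      ∃ c d : Fin 3, c ≠ 0 ∧ d ≠ 0 ∧ IsFactor x (c :: (v ++ [d])) := by
  constructor
  · intro h
    rw [isFactor_iff] at h
    obtain ⟨q, hq⟩ := h
    rw [occ_pat1] at hq
    obtain ⟨h1, hF0, h4⟩ := hq
    obtain ⟨j, hij, hvocc⟩ := master hfix v (q+1) hF0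
    cases j with
    | zero => exfalso; simp [Bk] at hij
    | succ j₀ =>
      have hBs := (occ_fList hfix v (j₀+1) hvocc).2
      have hcne : x j₀ ≠ 0 := by
        intro hc0
        obtain ⟨hB, hB1⟩ := blk0 hfix hc0
        have : x q = 1 := by rw [show q = Bk x j₀ + 1 by omega]; exact hB1
        rw [← h1] at this
        exact absurd this (by decide)
      have hxm1 : x (Bk x (j₀ + 1 + v.length) + 1) = 2 := by
        rw [hBs, show Bk x (j₀+1) + (fList v).length + 1 = q + 2 + (fList v).length by omega]
        exact h4.symm
      have hdne : x (j₀ + 1 + v.length) ≠ 0 := by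
        intro hd0
        obtain ⟨-, hB1⟩ := blk0 hfix hd0
        rw [hB1] at hxm1
        exact absurd hxm1 (by decide)
      refine ⟨x j₀, x (j₀ + 1 + v.length), hcne, hdne, ?_⟩
      rw [isFactor_iff]
      refine ⟨j₀, ?_⟩
      rw [occ_cons, occ_append, occ_singleton]
      exact ⟨rfl, hvocc, rfl⟩
  · rintro ⟨c, d, hc, hd, h⟩
    rw [isFactor_iff] at h ⊢
    obtain ⟨p, hp⟩ := h
    rw [occ_cons, occ_append, occ_singleton] at hp
    obtain ⟨h1, hvocc, h3⟩ := hp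
    have hBs := (occ_fList hfix v (p+1) hvocc).2
    have hq : ∃ qq, x qq = 2 ∧ qq + 1 = Bk x (p+1) := by
      rcases fin3 c with h'|h'|h'
      · exact absurd h' hc
      · obtain ⟨hB, hB1, hB2⟩ := blk1 hfix (h' ▸ h1.symm)
        exact ⟨Bk x p + 2, hB2, by omega⟩
      · obtain ⟨hB, hB1⟩ := blk2 hfix (h' ▸ h1.symm)
        exact ⟨Bk x p + 1, hB1, by omega⟩
    have hd2 : x (Bk x (p + 1 + v.length) + 1) = 2 := by
      rcases fin3 d with h'|h'|h'
      · exact absurd h' hd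
      · exact (blk1 hfix (h' ▸ h3.symm)).2.1
      · exact (blk2 hfix (h' ▸ h3.symm)).2
    obtain ⟨qq, hqq2, hqqB⟩ := hq
    refine ⟨qq, ?_⟩
    rw [occ_pat1]
    refine ⟨hqq2.symm, ?_, ?_⟩
    · rw [show qq + 1 = Bk x (p+1) from hqqB]
      exact occF0 hfix hvocc
    · rw [show qq + 2 + (fList v).length = Bk x (p + 1 + v.length) + 1 by omega]
      exact hd2.symm

lemma e3 {x : InfWord} (hfix : fInf x = x) (v : Word) :
    IsFactor x (0 :: ((2 :: ((fList v ++ [0]) ++ [2])) ++ [0])) ↔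
      IsFactor x (2 :: (v ++ [2])) := by
  constructor
  · intro h
    rw [isFactor_iff] at h ⊢
    obtain ⟨q, hq⟩ := h
    rw [occ_pat2] at hq
    obtain ⟨h1, h2, hF0, h4, h5⟩ := hq
    obtain ⟨j, hij, hvocc⟩ := master hfix v (q+2) hF0
    cases j with
    | zero => exfalso; simp [Bk] at hij
    | succ j₀ =>
      have hBs := (occ_fList hfix v (j₀+1) hvocc).2
      have hxj₀ : x j₀ = 2 := by
        rcases fin3 (x j₀) with h'|h'|h'
        · exfalso
          obtain ⟨hB, hB1⟩ := blk0 hfix h'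
          have : x (q+1) = 1 := by rw [show q + 1 = Bk x j₀ + 1 by omega]; exact hB1
          rw [← h2] at this
          exact absurd this (by decide)
        · exfalso
          obtain ⟨hB, hB1, hB2⟩ := blk1 hfix h'
          have : x q = 2 := by rw [show q = Bk x j₀ + 1 by omega]; exact hB1
          rw [← h1] at this
          exact absurd this (by decide)
        · exact h'
      have hxm1 : x (Bk x (j₀ + 1 + v.length) + 1) = 2 := by
        rw [hBs, show Bk x (j₀+1) + (fList v).length + 1 = q + 3 + (fList v).length by omega]
        exact h4.symm
      have hxm2 : x (Bk x (j₀ + 1 + v.length) + 2) = 0 := by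
        rw [hBs, show Bk x (j₀+1) + (fList v).length + 2 = q + 4 + (fList v).length by omega]
        exact h5.symm
      have hxm : x (j₀ + 1 + v.length) = 2 := by
        rcases fin3 (x (j₀ + 1 + v.length)) with h'|h'|h'
        · exfalso
          obtain ⟨-, hB1⟩ := blk0 hfix h'
          rw [hB1] at hxm1
          exact absurd hxm1 (by decide)
        · exfalso
          obtain ⟨-, -, hB2⟩ := blk1 hfix h'
          rw [hB2] at hxm2
          exact absurd hxm2 (by decide)
        · exact h'
      refine ⟨j₀, ?_⟩
      rw [occ_cons, occ_append, occ_singleton]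
      exact ⟨hxj₀.symm, hvocc, hxm.symm⟩
  · intro h
    rw [isFactor_iff] at h ⊢
    obtain ⟨p, hp⟩ := h
    rw [occ_cons, occ_append, occ_singleton] at hp
    obtain ⟨h1, hvocc, h3⟩ := hp
    obtain ⟨hBp, hBp1⟩ := blk2 hfix h1.symm
    obtain ⟨hBm, hBm1⟩ := blk2 hfix (h3.symm : x (p + 1 + v.length) = 2)
    have hBs := (occ_fList hfix v (p+1) hvocc).2
    refine ⟨Bk x p, ?_⟩
    rw [occ_pat2]
    refine ⟨(xB0 hfix p).symm, hBp1.symm, ?_, ?_, ?_⟩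
    · rw [show Bk x p + 2 = Bk x (p+1) by omega]
      exact occF0 hfix hvocc
    · rw [show Bk x p + 3 + (fList v).length = Bk x (p + 1 + v.length) + 1 by omega]
      exact hBm1.symm
    · rw [show Bk x p + 4 + (fList v).length = Bk x (p + 1 + v.length + 1) by omega]
      exact (xB0 hfix _).symm
  
lemma e4 {x : InfWord} (hfix : fInf x = x) (v : Word) :
    IsFactor x (2 :: ((2 :: ((fList v ++ [0]) ++ [2])) ++ [2])) ↔
      IsFactor x (1 :: (v ++ [1])) := by
  constructor
  · intro h
    rw [isFactor_iff] at h ⊢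
    obtain ⟨q, hq⟩ := h
    rw [occ_pat2] at hq
    obtain ⟨h1, h2, hF0, h4, h5⟩ := hq
    obtain ⟨j, hij, hvocc⟩ := master hfix v (q+2) hF0
    cases j with
    | zero => exfalso; simp [Bk] at hij
    | succ j₀ =>
      have hBs := (occ_fList hfix v (j₀+1) hvocc).2
      have hxj₀ : x j₀ = 1 := by
        rcases fin3 (x j₀) with h'|h'|h'
        · exfalso
          obtain ⟨hB, hB1⟩ := blk0 hfix h'
          have : x (q+1) = 1 := by rw [show q + 1 = Bk x j₀ + 1 by omega]; exact hB1
          rw [← h2] at this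
          exact absurd this (by decide)
        · exact h'
        · exfalso
          obtain ⟨hB, hB1⟩ := blk2 hfix h'
          have : x q = 0 := by rw [show q = Bk x j₀ by omega]; exact xB0 hfix j₀
          rw [← h1] at this
          exact absurd this (by decide)
      have hxm1 : x (Bk x (j₀ + 1 + v.length) + 1) = 2 := by
        rw [hBs, show Bk x (j₀+1) + (fList v).length + 1 = q + 3 + (fList v).length by omega]
        exact h4.symm
      have hxm2 : x (Bk x (j₀ + 1 + v.length) + 2) = 2 := by
        rw [hBs, show Bk x (j₀+1) + (fList v).length + 2 = q + 4 + (fList v).length by omega]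
        exact h5.symm
      have hxm : x (j₀ + 1 + v.length) = 1 := by
        rcases fin3 (x (j₀ + 1 + v.length)) with h'|h'|h'
        · exfalso
          obtain ⟨-, hB1⟩ := blk0 hfix h'
          rw [hB1] at hxm1
          exact absurd hxm1 (by decide)
        · exact h'
        · exfalso
          obtain ⟨hB, -⟩ := blk2 hfix h'
          have : x (Bk x (j₀ + 1 + v.length) + 2) = 0 := by
            rw [show Bk x (j₀ + 1 + v.length) + 2 = Bk x (j₀ + 1 + v.length + 1) by omega]
            exact xB0 hfix _
          rw [this] at hxm2
          exact absurd hxm2 (by decide)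
      refine ⟨j₀, ?_⟩
      rw [occ_cons, occ_append, occ_singleton]
      exact ⟨hxj₀.symm, hvocc, hxm.symm⟩
  · intro h
    rw [isFactor_iff] at h ⊢
    obtain ⟨p, hp⟩ := h
    rw [occ_cons, occ_append, occ_singleton] at hp
    obtain ⟨h1, hvocc, h3⟩ := hp
    obtain ⟨hBp, hBp1, hBp2⟩ := blk1 hfix h1.symm
    obtain ⟨hBm, hBm1, hBm2⟩ := blk1 hfix (h3.symm : x (p + 1 + v.length) = 1)
    have hBs := (occ_fList hfix v (p+1) hvocc).2
    refine ⟨Bk x p + 1, ?_⟩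
    rw [occ_pat2]
    refine ⟨hBp1.symm, ?_, ?_, ?_, ?_⟩
    · rw [show Bk x p + 1 + 1 = Bk x p + 2 by omega]
      exact hBp2.symm
    · rw [show Bk x p + 1 + 2 = Bk x (p+1) by omega]
      exact occF0 hfix hvocc
    · rw [show Bk x p + 1 + 3 + (fList v).length = Bk x (p + 1 + v.length) + 1 by omega]
      exact hBm1.symm
    · rw [show Bk x p + 1 + 4 + (fList v).length = Bk x (p + 1 + v.length) + 2 by omega]
      exact hBm2.symm

end PalExtAux

namespace PalExtAux

lemma inner_pal {a : Fin 3} {m : Word} (h : (a :: (m ++ [a])).reverse = a :: (m ++ [a])) :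
    m.reverse = m := by
  have hL : (a :: (m ++ [a])).reverse = a :: (m.reverse ++ [a]) := by
    rw [List.reverse_cons, List.reverse_append]
    simp
  rw [hL] at h
  have := (List.cons_injective h)
  exact (List.append_left_inj [a]).1 this

lemma eps_P {x : InfWord} (hfix : fInf x = x) (h0 : x 0 = 0) :
    ∃! a : Fin 3, IsFactor x (a :: (([] : Word) ++ [a])) := by
  refine ⟨2, mem22 hfix h0, ?_⟩
  intro b hb
  rw [isFactor_iff] at hb
  obtain ⟨q, hq⟩ := hb
  simp only [List.nil_append] at hq
  rw [occ_cons, occ_cons] at hq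
  obtain ⟨h1, h2, -⟩ := hq
  rcases fin3 b with h|h|h <;> subst h
  · exact (no00 hfix h1.symm h2.symm).elim
  · exact (no11 hfix h1.symm h2.symm).elim
  · rfl

lemma eps_Q {x : InfWord} (hfix : fInf x = x) (h0 : x 0 = 0) :
    ∀ c d : Fin 3, c ≠ 0 → d ≠ 0 → IsFactor x (c :: (([] : Word) ++ [d])) →
      ∀ a : Fin 3, IsFactor x (a :: (([] : Word) ++ [a])) → a ≠ 0 := by
  intro c d hc hd hcd a ha ha0
  subst ha0
  rw [isFactor_iff] at ha
  obtain ⟨q, hq⟩ := ha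
  simp only [List.nil_append] at hq
  rw [occ_cons, occ_cons] at hq
  obtain ⟨h1, h2, -⟩ := hq
  exact no00 hfix h1.symm h2.symm

theorem mainInd {x : InfWord} (hfix : fInf x = x) (h0 : x 0 = 0) :
    ∀ N (w : Word), w.length ≤ N → w.reverse = w → IsFactor x w →
      (∃! a : Fin 3, IsFactor x (a :: (w ++ [a]))) ∧
      (∀ c d : Fin 3, c ≠ 0 → d ≠ 0 → IsFactor x (c :: (w ++ [d])) →
        ∀ a : Fin 3, IsFactor x (a :: (w ++ [a])) → a ≠ 0) := by
  intro N
  induction N with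
  | zero =>
    intro w hlen hrev hw
    have hwnil : w = [] := List.length_eq_zero_iff.mp (by omega)
    subst hwnil
    exact ⟨eps_P hfix h0, eps_Q hfix h0⟩
  | succ N ih =>
    intro w hlen hrev hw
    cases w with
    | nil => exact ⟨eps_P hfix h0, eps_Q hfix h0⟩
    | cons a u =>
      rw [isFactor_iff] at hw
      obtain ⟨i, hocc⟩ := hw
      rcases fin3 a with ha|ha|ha <;> subst ha
      · -- CASE w = 0 :: u
        have hsh : u.reverse ++ [0] = (0 : Fin 3) :: u := by
          rw [← List.reverse_cons]; exact hrev
        have hx_i : x i = 0 := by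
          have := hocc 0 (by simp); simpa using this.symm
        have hxlast : x (i + (((0:Fin 3) :: u).length - 1)) = 0 := by
          have hocc2 : Occ x i (u.reverse ++ [0]) := by rw [hsh]; exact hocc
          rw [occ_append, occ_singleton] at hocc2
          have h2 := hocc2.2
          simp only [List.length_reverse] at h2
          simp only [List.length_cons]
          rw [show u.length + 1 - 1 = u.length by omega]
          exact h2.symm
        obtain ⟨v, j, hij, hvocc, hweq, hvlen⟩ :=
          desub hfix hocc (by simp) hx_i hxlast
        have hvpal : v.reverse = v := pal_desub (by rw [← hweq]; exact hrev)
        have hvfac : IsFactor x v := isFactor_iff.mpr ⟨j, hvocc⟩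
        have hNv : v.length ≤ N := by
          simp only [List.length_cons] at hlen hvlen
          omega
        obtain ⟨⟨a', ha', huniq⟩, hQv⟩ := ih v hNv hvpal hvfac
        have hQW : ∀ e : Fin 3, IsFactor x (0 :: (((0:Fin 3) :: u) ++ [e])) → False := by
          intro e he
          rw [isFactor_iff] at he
          obtain ⟨q, hq⟩ := he
          obtain ⟨hq1, hq2⟩ := first_two (by simp) hq
          exact no00 hfix hq1.symm (by simpa using hq2.symm)
        constructor
        · by_cases ha0 : a' = 0
          · subst ha0
            refine ⟨1, ?_, ?_⟩
            · rw [hweq]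
              exact (e1 hfix v).2 ha'
            · intro b hb
              rcases fin3 b with hb'|hb'|hb' <;> subst hb'
              · exact (hQW 0 hb).elim
              · rfl
              · exfalso
                rw [hweq] at hb
                obtain ⟨c, d, hc, hd, hcd⟩ := (e2 hfix v).1 hb
                exact hQv c d hc hd hcd 0 ha' rfl
          · refine ⟨2, ?_, ?_⟩
            · rw [hweq]
              exact (e2 hfix v).2 ⟨a', a', ha0, ha0, ha'⟩
            · intro b hb
              rcases fin3 b with hb'|hb'|hb' <;> subst hb'
              · exact (hQW 0 hb).elim
              · exfalso
                rw [hweq] at hb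
                exact ha0 (huniq 0 ((e1 hfix v).1 hb)).symm
              · rfl
        · intro c d hc hd hcd b hb hb0
          subst hb0
          exact hQW 0 hb
      · -- CASE w = 1 :: u
        have hsh : u.reverse ++ [1] = (1 : Fin 3) :: u := by
          rw [← List.reverse_cons]; exact hrev
        have hx_i : x i = 1 := by
          have := hocc 0 (by simp); simpa using this.symm
        have hxlast : x (i + u.length) = 1 := by
          have hocc2 : Occ x i (u.reverse ++ [1]) := by rw [hsh]; exact hocc
          rw [occ_append, occ_singleton] at hocc2
          have h2 := hocc2.2
          simp only [List.length_reverse] at h2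
          exact h2.symm
        obtain ⟨j, hij, hxj, hBj0, -⟩ := one1 hfix hx_i
        obtain ⟨j₂, hij₂, -, -, hnext⟩ := one1 hfix hxlast
        constructor
        · refine ⟨0, ?_, ?_⟩
          · show IsFactor x ((0:Fin 3) :: (((1:Fin 3) :: u) ++ [0]))
            rw [isFactor_iff]
            refine ⟨Bk x j, ?_⟩
            rw [occ_cons, occ_append, occ_singleton]
            refine ⟨hBj0.symm, ?_, ?_⟩
            · rw [show Bk x j + 1 = i by omega]; exact hocc
            · rw [show Bk x j + 1 + ((1:Fin 3)::u).length = i + u.length + 1 by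
                simp only [List.length_cons]; omega]
              exact hnext.symm
          · intro b hb
            rw [isFactor_iff] at hb
            obtain ⟨q, hq⟩ := hb
            obtain ⟨hq1, hq2⟩ := first_two (by simp) hq
            have hxq1 : x (q+1) = 1 := by simpa using hq2.symm
            rcases fin3 b with h|h|h <;> subst h
            · rfl
            · exact (no11 hfix hq1.symm hxq1).elim
            · exact (no21 hfix hq1.symm hxq1).elim
        · intro c d hc hd hcd b hb
          rw [isFactor_iff] at hcd
          obtain ⟨q, hq⟩ := hcd
          obtain ⟨hq1, hq2⟩ := first_two (by simp) hq
          have hxq1 : x (q+1) = 1 := by simpa using hq2.symm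
          rcases fin3 c with h|h|h <;> subst h
          · exact (hc rfl).elim
          · exact (no11 hfix hq1.symm hxq1).elim
          · exact (no21 hfix hq1.symm hxq1).elim
      · -- CASE w = 2 :: u
        cases u with
        | nil =>
          constructor
          · refine ⟨0, mem020 hfix h0, ?_⟩
            intro b hb
            rw [isFactor_iff] at hb
            obtain ⟨q, hq⟩ := hb
            obtain ⟨hq1, hq2⟩ := first_two (by simp) hq
            have hxq1 : x (q+1) = 2 := by simpa using hq2.symm
            have hq3 := last_letter hq
            have hxq2 : x (q+2) = b := by
              have := hq3.symm
              simp only [List.length_cons, List.length_nil] at this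
              rwa [show q + 1 + 1 = q + 2 by omega] at this
            rcases fin3 b with h|h|h <;> subst h
            · rfl
            · exact (no12 hfix hq1.symm hxq1).elim
            · exact (no222 hfix hq1.symm hxq1 hxq2).elim
          · intro c d hc hd hcd b hb hb0
            rw [isFactor_iff] at hcd
            obtain ⟨q, hq⟩ := hcd
            obtain ⟨hq1, hq2⟩ := first_two (by simp) hq
            have hxq1 : x (q+1) = 2 := by simpa using hq2.symm
            have hq3 := last_letter hq
            have hxq2 : x (q+2) = d := by
              have := hq3.symm
              simp only [List.length_cons, List.length_nil] at this
              rwa [show q + 1 + 1 = q + 2 by omega] at this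
            rcases fin3 c with h|h|h <;> subst h
            · exact hc rfl
            · exact no12 hfix hq1.symm hxq1
            · rcases fin3 d with h'|h'|h' <;> subst h'
              · exact hd rfl
              · exact no21 hfix hxq1 hxq2
              · exact no222 hfix hq1.symm hxq1 hxq2
        | cons b u' =>
          rcases fin3 b with hb|hb|hb <;> subst hb
          · -- CASE w = 2 :: 0 :: u'   (the substitutive case)
            have hsh : u'.reverse ++ [0, 2] = (2:Fin 3) :: 0 :: u' := by
              have := hrev
              rw [List.reverse_cons, List.reverse_cons, List.append_assoc] at this
              simpa using this
            cases hu'r : u'.reverse with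
            | nil =>
              exfalso
              rw [hu'r] at hsh
              simp only [List.nil_append] at hsh
              have : (0 : Fin 3) = 2 := by injection hsh
              exact absurd this (by decide)
            | cons hd tl =>
              rw [hu'r] at hsh
              have hhd : hd = 2 := by
                have := hsh
                simp only [List.cons_append] at this
                injection this
              subst hhd
              have hm0 : (0:Fin 3) :: u' = (tl ++ [0]) ++ [2] := by
                have := hsh
                simp only [List.cons_append] at this
                have h2 := List.cons_injective this
                rw [← h2]
                simp [List.append_assoc]
              have hwm : (2:Fin 3) :: 0 :: u' = 2 :: ((tl ++ [0]) ++ [2]) := by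
                rw [← hm0]
              have hmpal : (tl ++ [0]).reverse = tl ++ [0] := by
                apply inner_pal (a := 2)
                rw [← hwm]
                exact hrev
              -- occurrence of m
              have hoccm : Occ x (i+1) (tl ++ [0]) := by
                have : Occ x i ((2:Fin 3) :: ((tl ++ [0]) ++ [2])) := by
                  rw [← hwm]; exact hocc
                rw [occ_cons, occ_append] at this
                exact this.2.1
              have hmlen : 1 ≤ (tl ++ [0]).length := by simp
              have hmfirst : x (i+1) = 0 := by
                have h1 := hoccm 0 (by simp)
                have : (tl ++ [0]).getD 0 0 = 0 := by
                  cases htl : tl with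
                  | nil => rfl
                  | cons e tl' =>
                    have := hm0
                    rw [htl] at this
                    simp only [List.cons_append] at this
                    have he : (0 : Fin 3) = e := by injection this
                    rw [← he]; rfl
                rw [this] at h1
                exact h1.symm
              have hmlast : x (i + 1 + ((tl ++ [0]).length - 1)) = 0 := by
                have hlt : (tl ++ [0]).length - 1 < (tl ++ [0]).length := by simp
                have h1 := hoccm _ hlt
                have : (tl ++ [0]).getD ((tl ++ [0]).length - 1) 0 = 0 := by
                  rw [List.getD_append_right _ _ _ _ (by simp)]
                  simp
                rw [this] at h1
                exact h1.symm
              obtain ⟨v, j, hij, hvocc, hmeq, hvlenm⟩ :=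
                desub hfix hoccm hmlen hmfirst hmlast
              have hvpal : v.reverse = v := pal_desub (by rw [← hmeq]; exact hmpal)
              have hvfac : IsFactor x v := isFactor_iff.mpr ⟨j, hvocc⟩
              have hu'len : u'.length = tl.length + 1 := by
                have := congrArg List.length hu'r
                simpa using this
              have hNv : v.length ≤ N := by
                simp only [List.length_cons] at hlen
                simp only [List.length_append, List.length_cons, List.length_nil] at hvlenm
                omega
              obtain ⟨⟨a', ha', huniq⟩, hQv⟩ := ih v hNv hvpal hvfac
              have hwf : (2:Fin 3) :: 0 :: u' = 2 :: ((fList v ++ [0]) ++ [2]) := by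
                rw [hwm, hmeq]
              have hwfac2 : IsFactor x (2 :: ((fList v ++ [0]) ++ [2])) := by
                rw [← hwf]
                exact isFactor_iff.mpr ⟨i, hocc⟩
              obtain ⟨c, d, hc, hd, hcd⟩ := (e2 hfix v).1 hwfac2
              have ha'0 : a' ≠ 0 := hQv c d hc hd hcd a' ha'
              have hQW1 : ∀ e : Fin 3, IsFactor x (1 :: (((2:Fin 3) :: 0 :: u') ++ [e])) → False := by
                intro e he
                rw [isFactor_iff] at he
                obtain ⟨q, hq⟩ := he
                obtain ⟨hq1, hq2⟩ := first_two (by simp) hq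
                exact no12 hfix hq1.symm (by simpa using hq2.symm)
              have h21end : IsFactor x (2 :: (((2:Fin 3) :: 0 :: u') ++ [1])) → False := by
                intro he
                rw [hwf, isFactor_iff] at he
                obtain ⟨q, hq⟩ := he
                rw [occ_pat2] at hq
                obtain ⟨-, -, -, h4, h5⟩ := hq
                have h5' : x (q + 3 + (fList v).length + 1) = 1 := by
                  rw [show q + 3 + (fList v).length + 1 = q + 4 + (fList v).length by omega]
                  exact h5.symm
                exact no21 hfix h4.symm h5'
              rcases fin3 a' with h'|h'|h'
              · exact (ha'0 h').elim
              · subst h'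
                constructor
                · refine ⟨2, ?_, ?_⟩
                  · rw [hwf]
                    exact (e4 hfix v).2 ha'
                  · intro b hb
                    rcases fin3 b with h''|h''|h'' <;> subst h''
                    · exfalso
                      rw [hwf] at hb
                      have := huniq 2 ((e3 hfix v).1 hb)
                      exact absurd this (by decide)
                    · exact (hQW1 1 hb).elim
                    · rfl
                · intro c' d' hc' hd' hcd' b hb hb0
                  subst hb0
                  rw [hwf] at hb
                  have := huniq 2 ((e3 hfix v).1 hb)
                  exact absurd this (by decide)
              · subst h'
                constructor
                · refine ⟨0, ?_, ?_⟩
                  · rw [hwf]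
                    exact (e3 hfix v).2 ha'
                  · intro b hb
                    rcases fin3 b with h''|h''|h'' <;> subst h''
                    · rfl
                    · exact (hQW1 1 hb).elim
                    · exfalso
                      rw [hwf] at hb
                      have := huniq 1 ((e4 hfix v).1 hb)
                      exact absurd this (by decide)
                · intro c' d' hc' hd' hcd' b hb hb0
                  subst hb0
                  rcases fin3 c' with h''|h''|h'' <;> subst h''
                  · exact hc' rfl
                  · exact hQW1 d' hcd'
                  · rcases fin3 d' with h3|h3|h3 <;> subst h3
                    · exact hd' rfl
                    · exact h21end hcd'
                    · rw [hwf] at hcd'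
                      have := huniq 1 ((e4 hfix v).1 hcd')
                      exact absurd this (by decide)
          · -- CASE w = 2 :: 1 :: u'  : impossible
            exfalso
            have h1 := hocc 0 (by simp)
            have h2 := hocc 1 (by simp)
            exact no21 hfix (by simpa using h1.symm) (by simpa using h2.symm)
          · -- CASE w = 2 :: 2 :: u'
            have hsh : (u'.reverse ++ [2]) ++ [2] = (2:Fin 3) :: 2 :: u' := by
              have := hrev
              rw [List.reverse_cons, List.reverse_cons] at this
              exact this
            have hx_i : x i = 2 := by
              have := hocc 0 (by simp); simpa using this.symm
            have hx_i1 : x (i+1) = 2 := by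
              have := hocc 1 (by simp); simpa using this.symm
            obtain ⟨j, hij, hxj, hBj0, -⟩ := pair22 hfix hx_i hx_i1
            have hocc2 : Occ x i ((u'.reverse ++ [2]) ++ [2]) := by rw [hsh]; exact hocc
            rw [occ_append, occ_singleton] at hocc2
            obtain ⟨hocc3, hlast2⟩ := hocc2
            rw [occ_append, occ_singleton] at hocc3
            obtain ⟨-, hlast1⟩ := hocc3
            have he1 : x (i + u'.length) = 2 := by
              have := hlast1
              simp only [List.length_reverse] at this
              exact this.symm
            have he2 : x (i + u'.length + 1) = 2 := by
              have := hlast2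
              simp only [List.length_append, List.length_reverse, List.length_cons,
                List.length_nil] at this
              rw [show i + u'.length + 1 = i + (u'.length + 1) by omega]
              exact this.symm
            obtain ⟨j₂, hij₂, -, -, hend0⟩ := pair22 hfix he1 he2
            constructor
            · refine ⟨0, ?_, ?_⟩
              · show IsFactor x ((0:Fin 3) :: (((2:Fin 3) :: 2 :: u') ++ [0]))
                rw [isFactor_iff]
                refine ⟨Bk x j, ?_⟩
                rw [occ_cons, occ_append, occ_singleton]
                refine ⟨hBj0.symm, ?_, ?_⟩
                · rw [show Bk x j + 1 = i by omega]; exact hocc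
                · rw [show Bk x j + 1 + ((2:Fin 3)::2::u').length = i + u'.length + 2 by
                    simp only [List.length_cons]; omega]
                  rw [show i + u'.length + 2 = i + u'.length + 1 + 1 by omega] at hend0 ⊢
                  exact hend0.symm
              · intro b hb
                rw [isFactor_iff] at hb
                obtain ⟨q, hq⟩ := hb
                obtain ⟨hq1, hq2, hq3⟩ := first_three (by simp) hq
                have hxq1 : x (q+1) = 2 := by simpa using hq2.symm
                have hxq2 : x (q+2) = 2 := by simpa using hq3.symm
                obtain ⟨j', hij', -, -, -⟩ := pair22 hfix hxq1 hxq2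
                rw [hq1]
                rw [show q = Bk x j' by omega]
                exact xB0 hfix j'
            · intro c d hc hd hcd b hb hb0
              rw [isFactor_iff] at hcd
              obtain ⟨q, hq⟩ := hcd
              obtain ⟨hq1, hq2, hq3⟩ := first_three (by simp) hq
              have hxq1 : x (q+1) = 2 := by simpa using hq2.symm
              have hxq2 : x (q+2) = 2 := by simpa using hq3.symm
              obtain ⟨j', hij', -, -, -⟩ := pair22 hfix hxq1 hxq2
              apply hc
              rw [hq1, show q = Bk x j' by omega]
              exact xB0 hfix j'

end PalExtAux

/-- Every palindromic factor of `x = f^ω(0)` has a unique palindromic extension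
in `x`. -/
theorem x_unique_palindromic_extension (x : InfWord) (hfix : fInf x = x) (h0 : x 0 = 0)
    (w : Word) (hw : IsFactor x w) (hpal : w.reverse = w) :
    ∃! a : Fin 3, IsFactor x (a :: (w ++ [a])) :=
  (PalExtAux.mainInd hfix h0 w.length w le_rfl hpal hw).1
end
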